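/- arXiv:0711.2677 — 7 statements merged into one kernel-verified Lean document; each statement's English description precedes it below -/
import Mathlib

section
/- Let K be an algebraically closed field with a valuation v: K^* → ℚ such that v(n·1_K) = 0 for every nonzero integer n. For any rational number R ≥ 0, the set U = {u ∈ K^* : v(u) = 0 and v(u − 1) ≥ R} is a subgroup of K^* which is divisible: for every u ∈ U and every positive integer m there exists w ∈ U with w^m = u. -/
/-- The set `U = {u ∈ K^* : v u = 0 and v (u - 1) ≥ R}`. -/
def NearOneSubgroup {K : Type*} [Field K] (v : K → WithTop ℚ) (R : ℚ) (x : K) : Prop :=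
  v x = 0 ∧ (R : WithTop ℚ) ≤ v (x - 1)

/-- Let `K` be an algebraically closed field with a valuation
`v : K^* → ℚ` (encoded as `v : K → WithTop ℚ` with `v x = ⊤` iff `x = 0`) such that
`v n = 0` for every nonzero integer `n`.  For any rational `R ≥ 0`, the set
`U = {u ∈ K^* : v u = 0, v (u - 1) ≥ R}` is a subgroup of `K^*` which is divisible:
for every `u ∈ U` and every positive integer `m` there is `w ∈ U` with `w ^ m = u`. -/
theorem nearOne_divisible_subgroup
    {K : Type*} [Field K] [IsAlgClosed K] (v : K → WithTop ℚ)
    (hv0 : ∀ x : K, v x = ⊤ ↔ x = 0)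
    (hvmul : ∀ x y : K, v (x * y) = v x + v y)
    (hvadd : ∀ x y : K, min (v x) (v y) ≤ v (x + y))
    (hvint : ∀ m : ℤ, m ≠ 0 → v ((m : K)) = 0)
    (R : ℚ) (hR : 0 ≤ R) :
    NearOneSubgroup v R 1 ∧
    (∀ x y : K, NearOneSubgroup v R x → NearOneSubgroup v R y → NearOneSubgroup v R (x * y)) ∧
    (∀ x : K, NearOneSubgroup v R x → NearOneSubgroup v R x⁻¹) ∧
    (∀ x : K, NearOneSubgroup v R x → ∀ m : ℕ, 0 < m →
      ∃ w : K, NearOneSubgroup v R w ∧ w ^ m = x) := by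
  -- basic facts about v
  have h1 : v 1 = 0 := by
    have h := hvmul 1 1
    rw [one_mul] at h
    have hne1 : v 1 ≠ ⊤ := fun h => one_ne_zero ((hv0 1).mp h)
    lift v 1 to ℚ using hne1 with q hq
    have : q = q + q := by exact_mod_cast h
    have : q = 0 := by linarith
    exact_mod_cast this
  have hneg : ∀ x : K, v (-x) = v x := by
    have hm1 : v (-1 : K) = 0 := by
      have h := hvmul (-1 : K) (-1)
      rw [neg_mul_neg, one_mul, h1] at h
      have hne1 : v (-1 : K) ≠ ⊤ := fun h => neg_ne_zero.mpr one_ne_zero ((hv0 (-1)).mp h)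
      lift v (-1 : K) to ℚ using hne1 with q hq
      have : (0 : ℚ) = q + q := by exact_mod_cast h
      have : q = 0 := by linarith
      exact_mod_cast this
    intro x
    have := hvmul (-1 : K) x
    rw [neg_one_mul, hm1, zero_add] at this
    exact this
  -- ultrametric equality when valuations differ
  have hlt : ∀ a b : K, v a < v b → v (a + b) = v a := by
    intro a b hab
    refine le_antisymm ?_ ?_
    · by_contra hcon
      push_neg at hcon
      have h2 : v a = v ((a + b) + (-b)) := by ring_nf
      have h3 : min (v (a + b)) (v (-b)) ≤ v a := h2 ▸ hvadd (a + b) (-b)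
      rw [hneg] at h3
      have : v a < min (v (a + b)) (v b) := lt_min hcon hab
      exact absurd h3 (not_le.mpr this)
    · have := hvadd a b
      rwa [min_eq_left hab.le] at this
  -- powers
  have hpow : ∀ (x : K) (q : ℚ), v x = (q : WithTop ℚ) → ∀ n : ℕ, v (x ^ n) = ((n * q : ℚ) : WithTop ℚ) := by
    intro x q hx n
    induction n with
    | zero => simpa using h1
    | succ n ih =>
      rw [pow_succ, hvmul, ih, hx, ← WithTop.coe_add]
      congr 1
      push_cast
      ring
  have hpow0 : ∀ (x : K), x ≠ 0 → ∀ n : ℕ, 0 < n → v (x ^ n) = 0 → v x = 0 := by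
    intro x hx n hn hxn
    have hne : v x ≠ ⊤ := fun h => hx ((hv0 x).mp h)
    lift v x to ℚ using hne with q hq
    have hpn := hpow x q hq.symm n
    rw [hxn] at hpn
    have h0 : ((n : ℚ) * q : ℚ) = 0 := by exact_mod_cast hpn.symm
    have hq0 : q = 0 := by
      rcases mul_eq_zero.mp h0 with h | h
      · exact absurd h (Nat.cast_ne_zero.mpr hn.ne')
      · exact h
    exact_mod_cast hq0
  have hxpow0 : ∀ (x : K) (n : ℕ), v x = 0 → v (x ^ n) = 0 := by
    intro x n hx
    have := hpow x 0 (by exact_mod_cast hx) n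
    simpa using this
  -- nonneg sums
  have hsumge : ∀ (s : Finset ℕ) (f : ℕ → K), (∀ i ∈ s, 0 ≤ v (f i)) → 0 ≤ v (∑ i ∈ s, f i) := by
    intro s f
    induction s using Finset.induction_on with
    | empty => intro _; simp [(hv0 0).mpr rfl]
    | insert _ _ hni ih =>
      intro hf
      rw [Finset.sum_insert hni]
      refine le_trans ?_ (hvadd _ _)
      exact le_min (hf _ (Finset.mem_insert_self _ _))
        (ih fun i hi => hf i (Finset.mem_insert_of_mem hi))
  have hsumgt : ∀ (s : Finset ℕ) (f : ℕ → K), (∀ i ∈ s, 0 < v (f i)) → 0 < v (∑ i ∈ s, f i) := by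
    intro s f
    induction s using Finset.induction_on with
    | empty => intro _; simp [(hv0 0).mpr rfl]
    | insert _ _ hni ih =>
      intro hf
      rw [Finset.sum_insert hni]
      refine lt_of_lt_of_le ?_ (hvadd _ _)
      exact lt_min (hf _ (Finset.mem_insert_self _ _))
        (ih fun i hi => hf i (Finset.mem_insert_of_mem hi))
  have hsub1 : ∀ x : K, v x = 0 → 0 ≤ v (x - 1) := by
    intro x hx
    have := hvadd x (-1)
    rw [hneg, h1, hx, min_self, ← sub_eq_add_neg] at this
    exact this
  -- multiset products
  have hmprod : ∀ s : Multiset K, v s.prod = (s.map v).sum := by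
    intro s
    induction s using Multiset.induction_on with
    | empty => simpa using h1
    | cons a s ih => rw [Multiset.prod_cons, hvmul, ih, Multiset.map_cons, Multiset.sum_cons]
  refine ⟨⟨h1, by simp [(hv0 0).mpr rfl]⟩, ?_, ?_, ?_⟩
  · -- multiplication
    rintro x y ⟨hx0, hx1⟩ ⟨hy0, hy1⟩
    refine ⟨by rw [hvmul, hx0, hy0, add_zero], ?_⟩
    have hxy : x * y - 1 = x * (y - 1) + (x - 1) := by ring
    rw [hxy]
    refine le_trans (le_min ?_ hx1) (hvadd _ _)
    rw [hvmul, hx0, zero_add]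
    exact hy1
  · -- inverse
    rintro x ⟨hx0, hx1⟩
    have hxne : x ≠ 0 := by
      intro h; rw [h, (hv0 0).mpr rfl] at hx0; exact absurd hx0 (by simp)
    have hinv : v x⁻¹ = 0 := by
      have := hvmul x x⁻¹
      rw [mul_inv_cancel₀ hxne, h1, hx0, zero_add] at this
      exact this.symm
    refine ⟨hinv, ?_⟩
    have heq : x⁻¹ - 1 = x⁻¹ * (-(x - 1)) := by field_simp; ring
    rw [heq, hvmul, hinv, hneg, zero_add]
    exact hx1
  · -- divisibility
    rintro x ⟨hx0, hx1⟩ m hm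
    have hxne : x ≠ 0 := by
      intro h; rw [h, (hv0 0).mpr rfl] at hx0; exact absurd hx0 (by simp)
    set p : Polynomial K := Polynomial.X ^ m - Polynomial.C x with hp
    have hmonic : p.Monic := Polynomial.monic_X_pow_sub_C x hm.ne'
    have hsplits : Polynomial.Splits p := IsAlgClosed.splits p
    have hroot : ∀ r ∈ p.roots, r ^ m = x := by
      intro r hr
      have := Polynomial.isRoot_of_mem_roots hr
      rw [Polynomial.IsRoot, hp] at this
      simp only [Polynomial.eval_sub, Polynomial.eval_pow, Polynomial.eval_X,
        Polynomial.eval_C] at this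
      exact sub_eq_zero.mp this
    have hrne : ∀ r ∈ p.roots, r ≠ 0 := by
      intro r hr h
      apply hxne
      rw [← hroot r hr, h, zero_pow hm.ne']
    have hvr : ∀ r ∈ p.roots, v r = 0 := by
      intro r hr
      exact hpow0 r (hrne r hr) m hm (by rw [hroot r hr]; exact hx0)
    -- product formula: 1 - x = ∏ (1 - r)
    have hprodeq : (1 : K) - x = (p.roots.map (fun r => 1 - r)).prod := by
      have h := hsplits.eq_prod_roots_of_monic hmonic
      have h2 := congrArg (Polynomial.eval 1) h
      rw [Polynomial.eval_multiset_prod, Multiset.map_map] at h2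
      simp only [hp, Polynomial.eval_sub, Polynomial.eval_pow, Polynomial.eval_X,
        Polynomial.eval_C, one_pow, Function.comp] at h2
      exact h2
    have hvsum : v (1 - x) = (p.roots.map (fun r => v (1 - r))).sum := by
      rw [hprodeq, hmprod, Multiset.map_map]
      rfl
    by_cases hex : ∃ r ∈ p.roots, 0 < v (1 - r)
    · obtain ⟨r, hr, hrv⟩ := hex
      have hrx : r ^ m = x := hroot r hr
      have hvr0 : v r = 0 := hvr r hr
      have hgeom : (1 : K) - x = (1 - r) * ∑ i ∈ Finset.range m, r ^ i := by
        rw [← hrx]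
        linear_combination geom_sum_mul r m
      have hS : v (∑ i ∈ Finset.range m, r ^ i) = 0 := by
        have hsplit : ∑ i ∈ Finset.range m, r ^ i
            = (m : K) + ∑ i ∈ Finset.range m, (r ^ i - 1) := by
          rw [Finset.sum_sub_distrib]
          simp [Finset.card_range]
        have hT : 0 < v (∑ i ∈ Finset.range m, (r ^ i - 1)) := by
          apply hsumgt
          intro i _
          have hg : r ^ i - 1 = (∑ j ∈ Finset.range i, r ^ j) * (r - 1) :=
            (geom_sum_mul r i).symm
          rw [hg, hvmul]
          have h1' : 0 ≤ v (∑ j ∈ Finset.range i, r ^ j) :=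
            hsumge _ _ fun j _ => le_of_eq (hxpow0 r j hvr0).symm
          have h2' : 0 < v (r - 1) := by
            have : r - 1 = -(1 - r) := by ring
            rw [this, hneg]
            exact hrv
          calc (0 : WithTop ℚ) < 0 + v (r - 1) := by rwa [zero_add]
            _ ≤ _ := add_le_add_left h1' _
        have hvm : v ((m : K)) = 0 := by
          have := hvint (m : ℤ) (by exact_mod_cast hm.ne')
          rwa [Int.cast_natCast] at this
        rw [hsplit, hlt _ _ (by rw [hvm]; exact hT), hvm]
      have hfinal : v (r - 1) = v (x - 1) := by
        have e1 : v (1 - x) = v (1 - r) := by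
          rw [hgeom, hvmul, hS, add_zero]
        have e2 : v (1 - x) = v (x - 1) := by
          rw [show (1 : K) - x = -(x - 1) by ring, hneg]
        have e3 : v (1 - r) = v (r - 1) := by
          rw [show (1 : K) - r = -(r - 1) by ring, hneg]
        rw [← e3, ← e1, e2]
      exact ⟨r, ⟨hvr0, by rw [hfinal]; exact hx1⟩, hrx⟩
    · push_neg at hex
      have hall : ∀ r ∈ p.roots, v (1 - r) = 0 := by
        intro r hr
        refine le_antisymm (hex r hr) ?_
        have := hsub1 r (hvr r hr)
        rwa [show r - 1 = -(1 - r) by ring, hneg] at this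
      have hzero : v (1 - x) = 0 := by
        rw [hvsum]
        apply Multiset.sum_eq_zero
        intro a ha
        obtain ⟨r, hr, rfl⟩ := Multiset.mem_map.mp ha
        exact hall r hr
      have hR0 : (R : WithTop ℚ) ≤ 0 := by
        have e2 : v (x - 1) = v (1 - x) := by
          rw [show x - 1 = -(1 - x) by ring, hneg]
        rw [← hzero, ← e2]
        exact hx1
      obtain ⟨w, hw⟩ := IsAlgClosed.exists_pow_nat_eq x hm
      have hwne : w ≠ 0 := by
        intro h
        apply hxne
        rw [← hw, h, zero_pow hm.ne']
      have hvw : v w = 0 := hpow0 w hwne m hm (by rw [hw]; exact hx0)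
      exact ⟨w, ⟨hvw, le_trans hR0 (hsub1 w hvw)⟩, hw⟩
end

section
/- Let (ι, Γ, m) be a connected partial zero tension curve in ℚ^n, and suppose that the image ι(Γ ∖ ∂Γ) is not contained in any affine hyperplane of ℚ^n. Then the set of vectors σ_x(e), where x runs over the degree-one vertices of Γ and e over the edge of Γ ending at x, spans ℚ^n. -/
/-- A vector of `ℤ^n` is primitive: nonzero, and its coordinates have no common factor. -/
def IsPrimitiveVec {n : ℕ} (ρ : Fin n → ℤ) : Prop :=
  ρ ≠ 0 ∧ ∀ d : ℤ, (∀ i, d ∣ ρ i) → IsUnit d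

/-- A combinatorial model of a *partial zero tension curve* `(ι, Γ, m)` in `ℚ^n`.
The interior vertices (the vertices of `Γ ∖ ∂Γ`) are `Fin V`, placed in `ℚ^n` by `pos`.
Bounded edges (both endpoints interior) are `Fin EB`; the edge `e` joins `bsrc e` to
`bdst e`, has primitive direction `bdir e` (or `0` if it is contracted to a point),
length `blen e` and multiplicity `mB e`.  Leaf edges (one endpoint a degree-one boundary
vertex of `Γ`) are `Fin EL`; the leaf edge `e` is attached to the interior vertex
`lsrc e`, points in the primitive direction `ldir e`, has length `llen e ∈ ℚ ∪ {∞}`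
(length `∞` means the edge is an unbounded ray, finite length means a finite segment,
as permitted for partial zero tension curves) and multiplicity `mL e`. -/
structure PartialZTC (n : ℕ) where
  V : ℕ
  EB : ℕ
  EL : ℕ
  pos : Fin V → Fin n → ℚ
  bsrc : Fin EB → Fin V
  bdst : Fin EB → Fin V
  bdir : Fin EB → Fin n → ℤ
  blen : Fin EB → ℚ
  mB : Fin EB → ℕ
  lsrc : Fin EL → Fin V
  ldir : Fin EL → Fin n → ℤ
  llen : Fin EL → WithTop ℚ
  mL : Fin EL → ℕ

namespace PartialZTC

variable {n : ℕ} (C : PartialZTC n)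

/-- Validity of the data: multiplicities are positive, directions are primitive (with
`bdir e = 0` exactly for contracted edges), leaf edges are nondegenerate, bounded edges
join their endpoints (`pos (bdst e) - pos (bsrc e) = blen e • bdir e`), and the zero
tension condition `Σ_{e ∋ u} m(e)·ρ_u(e) = 0` holds at every interior vertex `u`. -/
def Valid : Prop :=
  (∀ e, 0 < C.mB e) ∧ (∀ e, 0 < C.mL e) ∧
  (∀ e, IsPrimitiveVec (C.ldir e)) ∧
  (∀ e, 0 < C.llen e) ∧
  (∀ e, (0 < C.blen e ∧ IsPrimitiveVec (C.bdir e)) ∨ (C.blen e = 0 ∧ C.bdir e = 0)) ∧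
  (∀ e, (fun i => C.pos (C.bdst e) i - C.pos (C.bsrc e) i)
      = fun i => C.blen e * (C.bdir e i : ℚ)) ∧
  (∀ u : Fin C.V,
    (∑ e : Fin C.EB, (C.mB e : ℤ) •
        ((if C.bsrc e = u then C.bdir e else 0) + (if C.bdst e = u then -C.bdir e else 0)))
      + (∑ e : Fin C.EL, if C.lsrc e = u then (C.mL e : ℤ) • C.ldir e else 0) = 0)

/-- Two interior vertices are adjacent if some edge joins them. -/
def Adj (u w : Fin C.V) : Prop :=
  ∃ e, (C.bsrc e = u ∧ C.bdst e = w) ∨ (C.bsrc e = w ∧ C.bdst e = u)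

/-- The graph `Γ` is connected. -/
def Connected : Prop :=
  ∀ u w : Fin C.V, Relation.ReflTransGen C.Adj u w

/-- The image `ι(Γ ∖ ∂Γ) ⊆ ℚ^n`: the vertex positions together with the points of the
(closed) bounded edges and of the (half-open) leaf edges. -/
def ImageSet : Set (Fin n → ℚ) :=
  {x | (∃ u, x = C.pos u) ∨
    (∃ e, ∃ s : ℚ, 0 ≤ s ∧ s ≤ C.blen e ∧
      x = fun i => C.pos (C.bsrc e) i + s * (C.bdir e i : ℚ)) ∨
    (∃ e, ∃ s : ℚ, 0 ≤ s ∧ (s : WithTop ℚ) < C.llen e ∧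
      x = fun i => C.pos (C.lsrc e) i + s * (C.ldir e i : ℚ))}

end PartialZTC

/-- Pairing of a rational vector with an integer vector, as an additive hom. -/
def pairZ {n : ℕ} (a : Fin n → ℚ) : (Fin n → ℤ) →+ ℚ where
  toFun v := ∑ i, a i * (v i : ℚ)
  map_zero' := by simp
  map_add' v w := by
    simp only [Pi.add_apply, Int.cast_add, mul_add]
    rw [Finset.sum_add_distrib]

/-- Let `(ι, Γ, m)` be a connected partial zero tension curve in `ℚ^n`
whose image `ι(Γ ∖ ∂Γ)` is not contained in any affine hyperplane.  Then the vectors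
`σ_x(e) = m(e)·ρ(e)`, where `x` runs over the degree-one vertices of `Γ` and `e` over the
edge of `Γ` ending at `x`, span `ℚ^n`. -/
theorem boundary_directions_span
    {n : ℕ} (C : PartialZTC n) (hval : C.Valid) (hconn : C.Connected)
    (hnohyp : ¬ ∃ (a : Fin n → ℚ) (b : ℚ), a ≠ 0 ∧
      ∀ p ∈ C.ImageSet, ∑ i, a i * p i = b) :
    Submodule.span ℚ
      {x : Fin n → ℚ | ∃ e : Fin C.EL, x = fun i => (C.mL e : ℚ) * (C.ldir e i : ℚ)} = ⊤ := by
  by_contra hspan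
  obtain ⟨hmB, hmL, hldir, hllen, hbgood, hedge, htens⟩ := hval
  obtain ⟨f, hf0, hfmap⟩ :=
    Submodule.exists_dual_map_eq_bot_of_lt_top
      (p := Submodule.span ℚ
        {x : Fin n → ℚ | ∃ e : Fin C.EL, x = fun i => (C.mL e : ℚ) * (C.ldir e i : ℚ)})
      (lt_top_iff_ne_top.mpr hspan) inferInstance
  set a : Fin n → ℚ := fun i => f (Pi.single i 1) with ha
  have hfp : ∀ p : Fin n → ℚ, f p = ∑ i, a i * p i := by
    intro p
    have hp : p = ∑ i, p i • (Pi.single i (1 : ℚ) : Fin n → ℚ) := by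
      funext j; rw [Finset.sum_apply]; simp [Pi.single_apply]
    calc f p = f (∑ i, p i • (Pi.single i (1 : ℚ) : Fin n → ℚ)) := by rw [← hp]
      _ = ∑ i, p i • f (Pi.single i 1) := by rw [map_sum]; exact Finset.sum_congr rfl fun i _ => map_smul f _ _
      _ = ∑ i, a i * p i := Finset.sum_congr rfl fun i _ => by rw [smul_eq_mul]; exact mul_comm _ _
  have ha0 : a ≠ 0 := by
    intro h
    apply hf0
    apply LinearMap.ext
    intro p
    rw [hfp p, h]
    simp
  have hfS : ∀ e : Fin C.EL, f (fun i => (C.mL e : ℚ) * (C.ldir e i : ℚ)) = 0 := by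
    intro e
    have hx : (fun i => (C.mL e : ℚ) * (C.ldir e i : ℚ)) ∈ Submodule.span ℚ
        {x : Fin n → ℚ | ∃ e : Fin C.EL, x = fun i => (C.mL e : ℚ) * (C.ldir e i : ℚ)} :=
      Submodule.subset_span ⟨e, rfl⟩
    have : f (fun i => (C.mL e : ℚ) * (C.ldir e i : ℚ)) ∈ (⊥ : Submodule ℚ ℚ) := by
      rw [← hfmap]; exact ⟨_, hx, rfl⟩
    simpa using this
  set A : Fin C.EB → ℚ := fun e => pairZ a (C.bdir e) with hA
  set L : Fin C.EL → ℚ := fun e => pairZ a (C.ldir e) with hLdef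
  have hLzero : ∀ e, L e = 0 := by
    intro e
    have h1 := hfS e
    rw [hfp] at h1
    have h2 : (C.mL e : ℚ) * L e = 0 := by
      rw [hLdef]
      show (C.mL e : ℚ) * ∑ i, a i * (C.ldir e i : ℚ) = 0
      rw [Finset.mul_sum, ← h1]
      exact Finset.sum_congr rfl fun i _ => by ring
    have hm : (C.mL e : ℚ) ≠ 0 := Nat.cast_ne_zero.mpr (hmL e).ne'
    exact (mul_eq_zero.mp h2).resolve_left hm
  set g : Fin C.V → ℚ := fun u => ∑ i, a i * C.pos u i with hg
  -- apply the pairing to the tension equation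
  have hT : ∀ u : Fin C.V,
      (∑ e : Fin C.EB, (C.mB e : ℚ) *
        ((if C.bsrc e = u then A e else 0) + (if C.bdst e = u then -A e else 0))) = 0 := by
    intro u
    have h0 := congrArg (pairZ a) (htens u)
    rw [map_add, map_sum, map_sum, map_zero] at h0
    have hleaf : ∀ e : Fin C.EL,
        pairZ a (if C.lsrc e = u then (C.mL e : ℤ) • C.ldir e else 0) = 0 := by
      intro e
      by_cases h : C.lsrc e = u
      · rw [if_pos h, map_zsmul, show pairZ a (C.ldir e) = L e from rfl, hLzero e, smul_zero]
      · rw [if_neg h, map_zero]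
    rw [Finset.sum_congr rfl fun e _ => hleaf e, Finset.sum_const_zero, add_zero] at h0
    have hb : ∀ e : Fin C.EB,
        pairZ a ((C.mB e : ℤ) • ((if C.bsrc e = u then C.bdir e else 0)
          + (if C.bdst e = u then -C.bdir e else 0)))
        = (C.mB e : ℚ) * ((if C.bsrc e = u then A e else 0)
          + (if C.bdst e = u then -A e else 0)) := by
      intro e
      rw [map_zsmul, zsmul_eq_mul, Int.cast_natCast, map_add]
      congr 1
      congr 1
      · by_cases h : C.bsrc e = u <;> simp [h, hA]
      · by_cases h : C.bdst e = u <;> simp [h, hA]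
    rw [Finset.sum_congr rfl fun e _ => hb e] at h0
    exact h0
  have hdiff : ∀ e, g (C.bdst e) - g (C.bsrc e) = C.blen e * A e := by
    intro e
    rw [hg]
    show (∑ i, a i * C.pos (C.bdst e) i) - (∑ i, a i * C.pos (C.bsrc e) i)
      = C.blen e * A e
    rw [← Finset.sum_sub_distrib, hA]
    show _ = C.blen e * ∑ i, a i * (C.bdir e i : ℚ)
    rw [Finset.mul_sum]
    apply Finset.sum_congr rfl
    intro i _
    have := congrFun (hedge e) i
    rw [← mul_sub, this]
    ring
  have hsum0 : (∑ e : Fin C.EB, (C.mB e : ℚ) * (C.blen e * (A e)^2)) = 0 := by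
    have h1 : (∑ u : Fin C.V, ∑ e : Fin C.EB, g u * ((C.mB e : ℚ) *
          ((if C.bsrc e = u then A e else 0) + (if C.bdst e = u then -A e else 0)))) = 0 := by
      apply Finset.sum_eq_zero; intro u _
      rw [← Finset.mul_sum, hT u, mul_zero]
    rw [Finset.sum_comm] at h1
    have h2 : ∀ e : Fin C.EB, (∑ u : Fin C.V, g u * ((C.mB e : ℚ) *
          ((if C.bsrc e = u then A e else 0) + (if C.bdst e = u then -A e else 0))))
        = (C.mB e : ℚ) * ((g (C.bsrc e) - g (C.bdst e)) * A e) := by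
      intro e
      simp only [mul_add, mul_ite, mul_zero, mul_neg, Finset.sum_add_distrib,
        Finset.sum_ite_eq, Finset.mem_univ, if_true, Finset.sum_neg_distrib]
      ring
    rw [Finset.sum_congr rfl fun e _ => h2 e] at h1
    have h3 : ∀ e : Fin C.EB, (C.mB e : ℚ) * (C.blen e * (A e)^2)
        = -((C.mB e : ℚ) * ((g (C.bsrc e) - g (C.bdst e)) * A e)) := by
      intro e
      have h := hdiff e
      rw [show g (C.bsrc e) - g (C.bdst e) = -(C.blen e * A e) by linarith]
      ring
    rw [Finset.sum_congr rfl fun e _ => h3 e, Finset.sum_neg_distrib, h1, neg_zero]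
  have hblen : ∀ e, 0 ≤ C.blen e := by
    intro e
    rcases hbgood e with ⟨h, _⟩ | ⟨h, _⟩
    · exact h.le
    · exact h.ge
  have hkey : ∀ e, C.blen e * A e = 0 := by
    intro e
    have hnn : ∀ e ∈ Finset.univ, 0 ≤ (C.mB e : ℚ) * (C.blen e * (A e)^2) := by
      intro e _
      exact mul_nonneg (by positivity) (mul_nonneg (hblen e) (sq_nonneg _))
    have h0 := (Finset.sum_eq_zero_iff_of_nonneg hnn).mp hsum0 e (Finset.mem_univ e)
    have hm : (C.mB e : ℚ) ≠ 0 := Nat.cast_ne_zero.mpr (hmB e).ne'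
    have h2 : C.blen e * (A e)^2 = 0 := (mul_eq_zero.mp h0).resolve_left hm
    rcases mul_eq_zero.mp h2 with h | h
    · rw [h, zero_mul]
    · rw [sq_eq_zero_iff.mp h, mul_zero]
  -- g is constant
  have hadj : ∀ {u w : Fin C.V}, C.Adj u w → g u = g w := by
    intro u w ⟨e, he⟩
    rcases he with ⟨h1, h2⟩ | ⟨h1, h2⟩
    · have := hdiff e; rw [h1, h2, hkey e] at this; linarith
    · have := hdiff e; rw [h1, h2, hkey e] at this; linarith
  have hgc : ∀ u w : Fin C.V, g u = g w := by
    intro u w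
    induction hconn u w with
    | refl => rfl
    | tail _ h ih => exact ih.trans (hadj h)
  set b : ℚ := if h : 0 < C.V then g ⟨0, h⟩ else 0 with hb
  have hgb : ∀ u : Fin C.V, g u = b := by
    intro u
    rw [hb, dif_pos u.pos]
    exact hgc u _
  apply hnohyp
  refine ⟨a, b, ha0, ?_⟩
  rintro p (⟨u, rfl⟩ | ⟨e, s, hs0, hsle, rfl⟩ | ⟨e, s, hs0, hsl, rfl⟩)
  · exact hgb u
  · have hsplit : (∑ i, a i * (C.pos (C.bsrc e) i + s * (C.bdir e i : ℚ)))
        = g (C.bsrc e) + s * A e := by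
      rw [hg, hA]
      show _ = (∑ i, a i * C.pos (C.bsrc e) i) + s * ∑ i, a i * (C.bdir e i : ℚ)
      rw [Finset.mul_sum, ← Finset.sum_add_distrib]
      exact Finset.sum_congr rfl fun i _ => by ring
    rw [hsplit]
    have hsA : s * A e = 0 := by
      rcases mul_eq_zero.mp (hkey e) with h | h
      · rw [le_antisymm (h ▸ hsle) hs0, zero_mul]
      · rw [h, mul_zero]
    rw [hsA, add_zero]
    exact hgb _
  · have hsplit : (∑ i, a i * (C.pos (C.lsrc e) i + s * (C.ldir e i : ℚ)))
        = g (C.lsrc e) + s * L e := by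
      rw [hg, hLdef]
      show _ = (∑ i, a i * C.pos (C.lsrc e) i) + s * ∑ i, a i * (C.ldir e i : ℚ)
      rw [Finset.mul_sum, ← Finset.sum_add_distrib]
      exact Finset.sum_congr rfl fun i _ => by ring
    rw [hsplit, hLzero, mul_zero, add_zero]
    exact hgb _
end

section
/- Let (ι₀, Γ₀, m₀) be a zero tension curve in ℚ^n such that ι₀ restricted to Γ₀ ∖ ∂Γ₀ is a homeomorphism onto its image Δ, no edge of Γ₀ is contracted to a point by ι₀, every edge e of Γ₀ has m₀(e) = 1, and every vertex of Γ₀ has degree at most 3. Let (ι, Γ, m) be a zero tension curve with ι(Γ ∖ ∂Γ) = Δ, such that every edge of Γ is mapped by ι either to a point or onto the image of an edge of Γ₀, and such that for every edge e of Γ₀ the sum of m(f) over the edges f of Γ with ι(f) = ι₀(e) equals 1. Then the union Γ' of the edges of Γ that are not contracted to points by ι maps homeomorphically onto Δ under ι. -/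
open scoped Classical

/-- A combinatorial model of a *zero tension curve* `(ι, Γ, m)` in `ℚ^n`.
The interior vertices (the vertices of `Γ ∖ ∂Γ`) are `Fin V`, placed in `ℚ^n` by `pos`.
Bounded edges (both endpoints interior) are `Fin EB`; the edge `e` joins `bsrc e` to
`bdst e`, has primitive direction `bdir e` (or `0` if it is contracted to a point),
length `blen e` and multiplicity `mB e`.  Unbounded edges (rays, with one endpoint a
degree-one boundary vertex of `Γ`) are `Fin ER`; the ray `e` is attached to the interior
vertex `rsrc e`, points in the primitive direction `rdir e` and has multiplicity `mR e`. -/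
structure ZTC (n : ℕ) where
  V : ℕ
  EB : ℕ
  ER : ℕ
  pos : Fin V → Fin n → ℚ
  bsrc : Fin EB → Fin V
  bdst : Fin EB → Fin V
  bdir : Fin EB → Fin n → ℤ
  blen : Fin EB → ℚ
  mB : Fin EB → ℕ
  rsrc : Fin ER → Fin V
  rdir : Fin ER → Fin n → ℤ
  mR : Fin ER → ℕ

namespace ZTC

variable {n : ℕ} (C : ZTC n)

/-- Validity of the data: multiplicities positive, directions primitive (with
`bdir e = 0` exactly for contracted edges), bounded edges join their endpoints, and the
zero tension condition holds at every interior vertex. -/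
def Valid : Prop :=
  (∀ e, 0 < C.mB e) ∧ (∀ e, 0 < C.mR e) ∧
  (∀ e, IsPrimitiveVec (C.rdir e)) ∧
  (∀ e, (0 < C.blen e ∧ IsPrimitiveVec (C.bdir e)) ∨ (C.blen e = 0 ∧ C.bdir e = 0)) ∧
  (∀ e, (fun i => C.pos (C.bdst e) i - C.pos (C.bsrc e) i)
      = fun i => C.blen e * (C.bdir e i : ℚ)) ∧
  (∀ u : Fin C.V,
    (∑ e : Fin C.EB, (C.mB e : ℤ) •
        ((if C.bsrc e = u then C.bdir e else 0) + (if C.bdst e = u then -C.bdir e else 0)))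
      + (∑ e : Fin C.ER, if C.rsrc e = u then (C.mR e : ℤ) • C.rdir e else 0) = 0)

/-- Two interior vertices are adjacent if some bounded edge joins them. -/
def Adj (u w : Fin C.V) : Prop :=
  ∃ e, (C.bsrc e = u ∧ C.bdst e = w) ∨ (C.bsrc e = w ∧ C.bdst e = u)

/-- The graph `Γ` is connected. -/
def Connected : Prop :=
  ∀ u w : Fin C.V, Relation.ReflTransGen C.Adj u w

/-- The set of points of the image of the (closed) bounded edge `e`. -/
def segPts (e : Fin C.EB) : Set (Fin n → ℚ) :=
  {x | ∃ s : ℚ, 0 ≤ s ∧ s ≤ C.blen e ∧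
    x = fun i => C.pos (C.bsrc e) i + s * (C.bdir e i : ℚ)}

/-- The set of points of the image of the unbounded ray `e`. -/
def rayPts (e : Fin C.ER) : Set (Fin n → ℚ) :=
  {x | ∃ s : ℚ, 0 ≤ s ∧ x = fun i => C.pos (C.rsrc e) i + s * (C.rdir e i : ℚ)}

/-- The union of the images of all edges of `Γ`, i.e. `ι(Γ ∖ ∂Γ)` when `Γ` has no
isolated vertices. -/
def EdgeImage : Set (Fin n → ℚ) :=
  (⋃ e : Fin C.EB, C.segPts e) ∪ ⋃ e : Fin C.ER, C.rayPts e

/-- `u` is an endpoint of the bounded edge `e`. -/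
def IsEnd (e : Fin C.EB) (u : Fin C.V) : Prop := C.bsrc e = u ∨ C.bdst e = u

/-- The degree (valence) of the vertex `u` of `Γ`. -/
noncomputable def degree (u : Fin C.V) : ℕ :=
  (Finset.univ.filter fun e : Fin C.EB => C.bsrc e = u).card +
  (Finset.univ.filter fun e : Fin C.EB => C.bdst e = u).card +
  (Finset.univ.filter fun e : Fin C.ER => C.rsrc e = u).card

/-- `ι` restricted to `Γ ∖ ∂Γ` is a homeomorphism onto its image: the vertex placement
is injective, distinct edges meet only in common endpoints, and a vertex lies on an edge
only if it is one of its endpoints. -/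
def IsEmbedded : Prop :=
  Function.Injective C.pos ∧
  (∀ e f : Fin C.EB, e ≠ f → ∀ x ∈ C.segPts e ∩ C.segPts f,
    ∃ u, x = C.pos u ∧ C.IsEnd e u ∧ C.IsEnd f u) ∧
  (∀ (e : Fin C.EB) (f : Fin C.ER), ∀ x ∈ C.segPts e ∩ C.rayPts f,
    ∃ u, x = C.pos u ∧ C.IsEnd e u ∧ C.rsrc f = u) ∧
  (∀ e f : Fin C.ER, e ≠ f → ∀ x ∈ C.rayPts e ∩ C.rayPts f,
    ∃ u, x = C.pos u ∧ C.rsrc e = u ∧ C.rsrc f = u) ∧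
  (∀ (e : Fin C.EB) (u : Fin C.V), C.pos u ∈ C.segPts e → C.IsEnd e u) ∧
  (∀ (e : Fin C.ER) (u : Fin C.V), C.pos u ∈ C.rayPts e → C.rsrc e = u)

/-- The vertex `u` belongs to the subgraph `Γ'` of non-contracted edges. -/
def InGamma' (u : Fin C.V) : Prop :=
  (∃ e : Fin C.EB, 0 < C.blen e ∧ C.IsEnd e u) ∨ (∃ e : Fin C.ER, C.rsrc e = u)

end ZTC

section Aux

variable {n : ℕ}

lemma prim_exists_ne {d : Fin n → ℤ} (hd : IsPrimitiveVec d) : ∃ i, d i ≠ 0 := by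
  by_contra hc
  push_neg at hc
  exact hd.1 (funext fun i => hc i)

lemma prim_ratio {d d' : Fin n → ℤ} (hd : IsPrimitiveVec d) (hd' : IsPrimitiveVec d')
    {q : ℚ} (h : ∀ i, (d' i : ℚ) = q * d i) : d' = d ∨ d' = -d := by
  have hq0 : q ≠ 0 := by
    intro h0
    apply hd'.1
    funext i
    have := h i
    rw [h0, zero_mul] at this
    exact_mod_cast this
  have key : ∀ i, (q.den : ℤ) * d' i = q.num * d i := by
    intro i
    have h1 : ((q.den : ℤ) : ℚ) * (d' i : ℚ) = ((q.num : ℤ) : ℚ) * (d i : ℚ) := by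
      rw [h i]
      have hd2 : (q.den : ℚ) * q = q.num := by
        rw [mul_comm, Rat.mul_den_eq_num]
      push_cast
      calc (q.den : ℚ) * (q * (d i : ℚ)) = ((q.den:ℚ) * q) * d i := by ring
        _ = (q.num : ℚ) * d i := by rw [hd2]
    exact_mod_cast h1
  have cop : IsCoprime (q.den : ℤ) q.num := by
    rw [Int.isCoprime_iff_gcd_eq_one, Int.gcd]
    simpa [Nat.coprime_comm] using q.reduced
  have hden : IsUnit (q.den : ℤ) := by
    apply hd.2
    intro i
    exact cop.dvd_of_dvd_mul_left ⟨d' i, (key i).symm⟩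
  have hnum : IsUnit q.num := by
    apply hd'.2
    intro i
    exact (cop.symm.dvd_of_dvd_mul_left ⟨d i, by linarith [key i]⟩)
  have hden1 : (q.den : ℤ) = 1 := by
    rcases Int.isUnit_iff.mp hden with h1 | h1
    · exact h1
    · exfalso
      have h2 : (0:ℤ) < (q.den : ℤ) := by exact_mod_cast q.pos
      omega
  rcases Int.isUnit_iff.mp hnum with h1 | h1
  · left; funext i; have := key i; rw [hden1, h1] at this; linarith
  · right; funext i; have := key i; rw [hden1, h1] at this
    simp only [Pi.neg_apply]; linarith

lemma card_le_of_rel {α β : Type*} {s : Finset α} {t : Finset β}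
    (R : α → β → Prop)
    (hex : ∀ a ∈ s, ∃ b ∈ t, R a b)
    (huniq : ∀ a₁ ∈ s, ∀ a₂ ∈ s, ∀ b, R a₁ b → R a₂ b → a₁ = a₂) :
    s.card ≤ t.card := by
  classical
  choose φ hφt hφR using hex
  rw [← Finset.card_attach (s := s)]
  apply Finset.card_le_card_of_injOn (fun a => φ a.1 a.2)
  · intro a _; exact hφt a.1 a.2
  · intro a₁ _ a₂ _ hval
    simp only at hval
    have h2 : R a₂.1 (φ a₁.1 a₁.2) := by
      rw [hval]; exact hφR a₂.1 a₂.2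
    exact Subtype.ext (huniq a₁.1 a₁.2 a₂.1 a₂.2 _ (hφR a₁.1 a₁.2) h2)

lemma seg_eq_cases {p p' : Fin n → ℚ} {d d' : Fin n → ℤ} {L L' : ℚ}
    (hL : 0 < L) (hL' : 0 < L') (hd : IsPrimitiveVec d) (hd' : IsPrimitiveVec d')
    (h : ∀ x : Fin n → ℚ, (∃ s : ℚ, 0 ≤ s ∧ s ≤ L' ∧ x = fun i => p' i + s * (d' i : ℚ)) ↔
        (∃ s : ℚ, 0 ≤ s ∧ s ≤ L ∧ x = fun i => p i + s * (d i : ℚ))) :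
    (p' = p ∧ d' = d ∧ L' = L) ∨
    ((p' = fun i => p i + L * (d i : ℚ)) ∧ d' = -d ∧ L' = L) := by
  obtain ⟨i₀, hi₀⟩ := prim_exists_ne hd
  have hdi : ((d i₀ : ℚ)) ≠ 0 := Int.cast_ne_zero.mpr hi₀
  obtain ⟨s₀, hs₀0, hs₀L, hp'⟩ := (h p').mp ⟨0, le_refl _, hL'.le, funext fun i => by ring⟩
  obtain ⟨s₁, hs₁0, hs₁L, hp'd⟩ := (h (fun i => p' i + L' * (d' i : ℚ))).mp
    ⟨L', hL'.le, le_refl _, rfl⟩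
  have hratio : ∀ i, (d' i : ℚ) = ((s₁ - s₀) / L') * d i := by
    intro i
    have h1 := congrFun hp'd i
    have h2 := congrFun hp' i
    field_simp
    nlinarith [h1, h2]
  rcases prim_ratio hd hd' hratio with hdd | hdd
  · left
    have hL'eq : L' = s₁ - s₀ := by
      have h1 := hratio i₀
      rw [hdd] at h1
      have h2 : ((s₁ - s₀) / L') * (d i₀ : ℚ) = 1 * d i₀ := by linarith
      have h3 := mul_right_cancel₀ hdi h2
      field_simp at h3
      linarith
    obtain ⟨t, ht0, htL, hpt⟩ := (h p).mpr ⟨0, le_refl _, hL.le, funext fun i => by ring⟩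
    have hpt' : ∀ i, p i = p i + (s₀ + t) * d i := by
      intro i
      have h1 := congrFun hpt i
      have h2 := congrFun hp' i
      rw [hdd] at h1
      nlinarith [h1, h2]
    have hst : s₀ + t = 0 := by
      have := hpt' i₀
      have h3 : (s₀ + t) * (d i₀ : ℚ) = 0 := by linarith
      rcases mul_eq_zero.mp h3 with h4 | h4
      · exact h4
      · exact absurd h4 hdi
    have hs₀ : s₀ = 0 := by linarith
    have hpp : p' = p := by
      funext i
      have := congrFun hp' i
      rw [hs₀] at this
      simpa using this
    refine ⟨hpp, hdd, ?_⟩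
    obtain ⟨t', ht'0, ht'L, hpt2⟩ := (h (fun i => p i + L * (d i : ℚ))).mpr
      ⟨L, hL.le, le_refl _, rfl⟩
    have : L = t' := by
      have h1 := congrFun hpt2 i₀
      rw [hdd, hpp] at h1
      have h3 : (L - t') * (d i₀ : ℚ) = 0 := by linarith
      rcases mul_eq_zero.mp h3 with h4 | h4
      · linarith
      · exact absurd h4 hdi
    have hLle : L ≤ L' := by linarith
    have hL'le : L' ≤ L := by linarith
    linarith
  · right
    have hL'eq : s₁ = s₀ - L' := by
      have h1 := hratio i₀
      rw [hdd] at h1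
      simp only [Pi.neg_apply, Int.cast_neg] at h1
      have h2 : ((s₁ - s₀) / L') * (d i₀ : ℚ) = (-1) * d i₀ := by linarith
      have h3 := mul_right_cancel₀ hdi h2
      field_simp at h3
      linarith
    obtain ⟨t, ht0, htL, hpt⟩ := (h (fun i => p i + L * (d i : ℚ))).mpr
      ⟨L, hL.le, le_refl _, rfl⟩
    have hLt : L = s₀ - t := by
      have h1 := congrFun hpt i₀
      have h2 := congrFun hp' i₀
      rw [hdd] at h1
      simp only [Pi.neg_apply, Int.cast_neg] at h1
      have h3 : (L - (s₀ - t)) * (d i₀ : ℚ) = 0 := by nlinarith [h1, h2]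
      rcases mul_eq_zero.mp h3 with h4 | h4
      · linarith
      · exact absurd h4 hdi
    have hs₀L' : s₀ = L := by linarith
    have hpp : p' = fun i => p i + L * (d i : ℚ) := by
      funext i
      have := congrFun hp' i
      rw [hs₀L'] at this
      exact this
    refine ⟨hpp, hdd, ?_⟩
    have h1 : L' ≤ L := by linarith
    obtain ⟨t', ht'0, ht'L, hpt2⟩ := (h p).mpr ⟨0, le_refl _, hL.le, funext fun i => by ring⟩
    have : t' = L := by
      have h2 := congrFun hpt2 i₀
      rw [hdd, hpp] at h2
      simp only [Pi.neg_apply, Int.cast_neg] at h2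
      have h3 : (L - t') * (d i₀ : ℚ) = 0 := by nlinarith [h2]
      rcases mul_eq_zero.mp h3 with h4 | h4
      · linarith
      · exact absurd h4 hdi
    linarith

lemma ray_eq_cases {p p' : Fin n → ℚ} {d d' : Fin n → ℤ}
    (hd : IsPrimitiveVec d) (hd' : IsPrimitiveVec d')
    (h : ∀ x : Fin n → ℚ, (∃ s : ℚ, 0 ≤ s ∧ x = fun i => p' i + s * (d' i : ℚ)) ↔
        (∃ s : ℚ, 0 ≤ s ∧ x = fun i => p i + s * (d i : ℚ))) :
    p' = p ∧ d' = d := by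
  obtain ⟨i₀, hi₀⟩ := prim_exists_ne hd
  have hdi : ((d i₀ : ℚ)) ≠ 0 := Int.cast_ne_zero.mpr hi₀
  obtain ⟨s₀, hs₀0, hp'⟩ := (h p').mp ⟨0, le_refl _, funext fun i => by ring⟩
  obtain ⟨s₁, hs₁0, hp'd⟩ := (h (fun i => p' i + 1 * (d' i : ℚ))).mp ⟨1, zero_le_one, rfl⟩
  have hratio : ∀ i, (d' i : ℚ) = (s₁ - s₀) * d i := by
    intro i
    have h1 := congrFun hp'd i
    have h2 := congrFun hp' i
    nlinarith [h1, h2]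
  rcases prim_ratio hd hd' hratio with hdd | hdd
  · constructor
    · obtain ⟨t, ht0, hpt⟩ := (h p).mpr ⟨0, le_refl _, funext fun i => by ring⟩
      have hpt' : (s₀ + t) * (d i₀ : ℚ) = 0 := by
        have h1 := congrFun hpt i₀
        have h2 := congrFun hp' i₀
        rw [hdd] at h1
        nlinarith [h1, h2]
      have hst : s₀ + t = 0 := by
        rcases mul_eq_zero.mp hpt' with h4 | h4
        · exact h4
        · exact absurd h4 hdi
      have hs₀ : s₀ = 0 := by linarith
      funext i
      have := congrFun hp' i
      rw [hs₀] at this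
      simpa using this
    · exact hdd
  · exfalso
    obtain ⟨t, ht0, hpt⟩ := (h (fun i => p i + (s₀ + 1) * (d i : ℚ))).mpr
      ⟨s₀ + 1, by linarith, rfl⟩
    have h1 := congrFun hpt i₀
    have h2 := congrFun hp' i₀
    rw [hdd] at h1
    simp only [Pi.neg_apply, Int.cast_neg] at h1
    have h3 : (s₀ + 1 - (s₀ - t)) * (d i₀ : ℚ) = 0 := by nlinarith [h1, h2]
    rcases mul_eq_zero.mp h3 with h4 | h4
    · linarith
    · exact absurd h4 hdi

namespace ZTC

variable {C C₀ : ZTC n}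

lemma bdir_prim (hval : C.Valid) {f : Fin C.EB} (hf : 0 < C.blen f) :
    IsPrimitiveVec (C.bdir f) := by
  rcases hval.2.2.2.1 f with h | h
  · exact h.2
  · exact absurd h.1 (by linarith)

lemma blen_nonneg (hval : C.Valid) (f : Fin C.EB) : 0 ≤ C.blen f := by
  rcases hval.2.2.2.1 f with h | h
  · exact h.1.le
  · exact h.1.ge

lemma dst_eq (hval : C.Valid) (f : Fin C.EB) :
    C.pos (C.bdst f) = fun i => C.pos (C.bsrc f) i + C.blen f * (C.bdir f i : ℚ) := by
  funext i
  have := congrFun (hval.2.2.2.2.1 f) i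
  linarith

lemma mem_src (hval : C.Valid) (f : Fin C.EB) : C.pos (C.bsrc f) ∈ C.segPts f :=
  ⟨0, le_refl _, blen_nonneg hval f, funext fun i => by ring⟩

lemma mem_dst (hval : C.Valid) (f : Fin C.EB) : C.pos (C.bdst f) ∈ C.segPts f :=
  ⟨C.blen f, blen_nonneg hval f, le_refl _, dst_eq hval f⟩

lemma src_ne_dst (hval : C.Valid) {f : Fin C.EB} (hf : 0 < C.blen f) :
    C.pos (C.bsrc f) ≠ C.pos (C.bdst f) := by
  intro hc
  obtain ⟨i₀, hi₀⟩ := prim_exists_ne (bdir_prim hval hf)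
  have h1 := congrFun (dst_eq hval f) i₀
  have h2 := congrFun hc i₀
  have h3 : C.blen f * (C.bdir f i₀ : ℚ) ≠ 0 :=
    mul_ne_zero (ne_of_gt hf) (Int.cast_ne_zero.mpr hi₀)
  apply h3
  linarith

/-- Matching of a nondegenerate bounded edge of `C` with a bounded edge of `C₀`
having the same image. -/
lemma seg_match (hval : C.Valid) (hval₀ : C₀.Valid) {f : Fin C.EB} {e : Fin C₀.EB}
    (hf : 0 < C.blen f) (he : 0 < C₀.blen e) (h : C.segPts f = C₀.segPts e) :
    (C.pos (C.bsrc f) = C₀.pos (C₀.bsrc e) ∧ C.pos (C.bdst f) = C₀.pos (C₀.bdst e)) ∨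
    (C.pos (C.bsrc f) = C₀.pos (C₀.bdst e) ∧ C.pos (C.bdst f) = C₀.pos (C₀.bsrc e)) := by
  have hiff : ∀ x : Fin n → ℚ,
      (∃ s : ℚ, 0 ≤ s ∧ s ≤ C.blen f ∧ x = fun i => C.pos (C.bsrc f) i + s * (C.bdir f i : ℚ)) ↔
      (∃ s : ℚ, 0 ≤ s ∧ s ≤ C₀.blen e ∧
        x = fun i => C₀.pos (C₀.bsrc e) i + s * (C₀.bdir e i : ℚ)) := by
    intro x
    exact Set.ext_iff.mp h x
  rcases seg_eq_cases he hf (bdir_prim hval₀ he) (bdir_prim hval hf) hiff with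
    ⟨hp, hd, hL⟩ | ⟨hp, hd, hL⟩
  · left
    refine ⟨hp, ?_⟩
    rw [dst_eq hval f, dst_eq hval₀ e]
    funext i
    have h1 := congrFun hp i
    have h2 := congrFun hd i
    simp only [h1, h2, hL]
  · right
    constructor
    · rw [hp, dst_eq hval₀ e]
    · rw [dst_eq hval f, hp]
      funext i
      have h2 := congrFun hd i
      simp only [Pi.neg_apply] at h2
      rw [hL, h2]
      push_cast
      ring

lemma ray_match (hval : C.Valid) (hval₀ : C₀.Valid) {f : Fin C.ER} {e : Fin C₀.ER}
    (h : C.rayPts f = C₀.rayPts e) :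
    C.pos (C.rsrc f) = C₀.pos (C₀.rsrc e) ∧ C.rdir f = C₀.rdir e := by
  have hiff : ∀ x : Fin n → ℚ,
      (∃ s : ℚ, 0 ≤ s ∧ x = fun i => C.pos (C.rsrc f) i + s * (C.rdir f i : ℚ)) ↔
      (∃ s : ℚ, 0 ≤ s ∧ x = fun i => C₀.pos (C₀.rsrc e) i + s * (C₀.rdir e i : ℚ)) := by
    intro x
    exact Set.ext_iff.mp h x
  exact ray_eq_cases (hval₀.2.2.1 e) (hval.2.2.1 f) hiff

end ZTC

end Aux

section Aux2

variable {n : ℕ} {C : ZTC n}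

namespace ZTC

/-- The zero tension condition rewritten as a sum over the non-contracted darts at a
vertex. -/
lemma tension_filter (hval : C.Valid) (v : Fin C.V) :
    ((∑ f ∈ Finset.univ.filter fun f : Fin C.EB => C.bsrc f = v ∧ 0 < C.blen f,
        (C.mB f : ℤ) • C.bdir f) +
      (∑ f ∈ Finset.univ.filter fun f : Fin C.EB => C.bdst f = v ∧ 0 < C.blen f,
        (C.mB f : ℤ) • (-C.bdir f))) +
      (∑ r ∈ Finset.univ.filter fun r : Fin C.ER => C.rsrc r = v,
        (C.mR r : ℤ) • C.rdir r) = 0 := by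
  have h0 := hval.2.2.2.2.2 v
  have e1 : (∑ e : Fin C.EB, (C.mB e : ℤ) •
        ((if C.bsrc e = v then C.bdir e else 0) + (if C.bdst e = v then -C.bdir e else 0)))
      = (∑ e : Fin C.EB, (C.mB e : ℤ) • (if C.bsrc e = v then C.bdir e else 0))
        + (∑ e : Fin C.EB, (C.mB e : ℤ) • (if C.bdst e = v then -C.bdir e else 0)) := by
    rw [← Finset.sum_add_distrib]
    exact Finset.sum_congr rfl fun e _ => smul_add _ _ _
  have e2 : (∑ e : Fin C.EB, (C.mB e : ℤ) • (if C.bsrc e = v then C.bdir e else 0))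
      = ∑ f ∈ Finset.univ.filter fun f : Fin C.EB => C.bsrc f = v ∧ 0 < C.blen f,
          (C.mB f : ℤ) • C.bdir f := by
    rw [Finset.sum_filter]
    apply Finset.sum_congr rfl
    intro e _
    by_cases h1 : C.bsrc e = v
    · by_cases h2 : 0 < C.blen e
      · simp [h1, h2]
      · have h3 := (hval.2.2.2.1 e).resolve_left (fun hc => h2 hc.1)
        simp [h1, h2, h3.2]
    · simp [h1]
  have e3 : (∑ e : Fin C.EB, (C.mB e : ℤ) • (if C.bdst e = v then -C.bdir e else 0))
      = ∑ f ∈ Finset.univ.filter fun f : Fin C.EB => C.bdst f = v ∧ 0 < C.blen f,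
          (C.mB f : ℤ) • (-C.bdir f) := by
    rw [Finset.sum_filter]
    apply Finset.sum_congr rfl
    intro e _
    by_cases h1 : C.bdst e = v
    · by_cases h2 : 0 < C.blen e
      · simp [h1, h2]
      · have h3 := (hval.2.2.2.1 e).resolve_left (fun hc => h2 hc.1)
        simp [h1, h2, h3.2]
    · simp [h1]
  have e4 : (∑ e : Fin C.ER, if C.rsrc e = v then (C.mR e : ℤ) • C.rdir e else 0)
      = ∑ r ∈ Finset.univ.filter fun r : Fin C.ER => C.rsrc r = v,
          (C.mR r : ℤ) • C.rdir r := (Finset.sum_filter _ _).symm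
  rw [e1, e2, e3, e4] at h0
  exact h0

/-- Every vertex of `Γ'` carries at least two non-contracted darts. -/
lemma two_le_darts (hval : C.Valid) {v : Fin C.V} (hv : C.InGamma' v) :
    2 ≤ ((Finset.univ.filter fun f : Fin C.EB => C.bsrc f = v ∧ 0 < C.blen f).card
        + (Finset.univ.filter fun f : Fin C.EB => C.bdst f = v ∧ 0 < C.blen f).card)
        + (Finset.univ.filter fun r : Fin C.ER => C.rsrc r = v).card := by
  classical
  set F1 := Finset.univ.filter fun f : Fin C.EB => C.bsrc f = v ∧ 0 < C.blen f with hF1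
  set F2 := Finset.univ.filter fun f : Fin C.EB => C.bdst f = v ∧ 0 < C.blen f with hF2
  set F3 := Finset.univ.filter fun r : Fin C.ER => C.rsrc r = v with hF3
  have h1 : 1 ≤ (F1.card + F2.card) + F3.card := by
    rcases hv with ⟨e, he, hend⟩ | ⟨e, he⟩
    · rcases hend with h | h
      · have : e ∈ F1 := by simp [hF1, h, he]
        have := Finset.card_pos.mpr ⟨e, this⟩
        omega
      · have : e ∈ F2 := by simp [hF2, h, he]
        have := Finset.card_pos.mpr ⟨e, this⟩
        omega
    · have : e ∈ F3 := by simp [hF3, he]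
      have := Finset.card_pos.mpr ⟨e, this⟩
      omega
  by_contra hc
  push_neg at hc
  have hten := tension_filter hval v
  rw [← hF1, ← hF2, ← hF3] at hten
  have hcases : (F1.card = 1 ∧ F2.card = 0 ∧ F3.card = 0)
      ∨ (F1.card = 0 ∧ F2.card = 1 ∧ F3.card = 0)
      ∨ (F1.card = 0 ∧ F2.card = 0 ∧ F3.card = 1) := by omega
  rcases hcases with ⟨ha, hb, hd⟩ | ⟨ha, hb, hd⟩ | ⟨ha, hb, hd⟩
  · obtain ⟨f, hfeq⟩ := Finset.card_eq_one.mp ha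
    rw [hfeq, Finset.card_eq_zero.mp hb, Finset.card_eq_zero.mp hd] at hten
    simp only [Finset.sum_singleton, Finset.sum_empty, add_zero] at hten
    have hfmem : f ∈ F1 := by rw [hfeq]; exact Finset.mem_singleton_self f
    rw [hF1, Finset.mem_filter] at hfmem
    obtain ⟨i₀, hi₀⟩ := prim_exists_ne (bdir_prim hval hfmem.2.2)
    have := congrFun hten i₀
    simp only [Pi.smul_apply, smul_eq_mul, Pi.zero_apply] at this
    rcases mul_eq_zero.mp this with h | h
    · have := hval.1 f; omega
    · exact hi₀ h
  · obtain ⟨f, hfeq⟩ := Finset.card_eq_one.mp hb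
    rw [hfeq, Finset.card_eq_zero.mp ha, Finset.card_eq_zero.mp hd] at hten
    simp only [Finset.sum_singleton, Finset.sum_empty, add_zero, zero_add] at hten
    have hfmem : f ∈ F2 := by rw [hfeq]; exact Finset.mem_singleton_self f
    rw [hF2, Finset.mem_filter] at hfmem
    obtain ⟨i₀, hi₀⟩ := prim_exists_ne (bdir_prim hval hfmem.2.2)
    have := congrFun hten i₀
    simp only [Pi.smul_apply, Pi.neg_apply, smul_eq_mul, Pi.zero_apply] at this
    rcases mul_eq_zero.mp this with h | h
    · have := hval.1 f; omega
    · omega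
  · obtain ⟨r, hreq⟩ := Finset.card_eq_one.mp hd
    rw [hreq, Finset.card_eq_zero.mp ha, Finset.card_eq_zero.mp hb] at hten
    simp only [Finset.sum_singleton, Finset.sum_empty, add_zero, zero_add] at hten
    obtain ⟨i₀, hi₀⟩ := prim_exists_ne (hval.2.2.1 r)
    have := congrFun hten i₀
    simp only [Pi.smul_apply, smul_eq_mul, Pi.zero_apply] at this
    rcases mul_eq_zero.mp this with h | h
    · have := hval.2.1 r; omega
    · exact hi₀ h

end ZTC

end Aux2

/-- Let `(ι₀, Γ₀, m₀)` be a zero tension curve in `ℚ^n` such that `ι₀`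
is a homeomorphism of `Γ₀ ∖ ∂Γ₀` onto its image `Δ`, no edge is contracted, all
multiplicities are `1` and all vertices have degree at most `3`.  Let `(ι, Γ, m)` be a
zero tension curve with image `Δ`, each of whose edges is mapped to a point or onto the
image of an edge of `Γ₀`, and such that for every edge `e` of `Γ₀` the multiplicities of
the edges of `Γ` mapping onto `ι₀(e)` sum to `1`.  Then the union `Γ'` of the
non-contracted edges of `Γ` maps homeomorphically onto `Δ` under `ι`. -/
theorem trivalent_subgraph_homeomorphism
    {n : ℕ} (C₀ C : ZTC n)
    (hval₀ : C₀.Valid) (hconn₀ : C₀.Connected)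
    (hemb₀ : C₀.IsEmbedded)
    (hnocontr₀ : ∀ e, 0 < C₀.blen e)
    (hm₀B : ∀ e, C₀.mB e = 1) (hm₀R : ∀ e, C₀.mR e = 1)
    (hdeg₀ : ∀ u, C₀.degree u ≤ 3)
    (hval : C.Valid) (hconn : C.Connected)
    (himage : C.EdgeImage = C₀.EdgeImage)
    (hmapseg : ∀ f : Fin C.EB, C.blen f = 0 ∨ ∃ e : Fin C₀.EB, C.segPts f = C₀.segPts e)
    (hmapray : ∀ f : Fin C.ER, ∃ e : Fin C₀.ER, C.rayPts f = C₀.rayPts e)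
    (hsumseg : ∀ e : Fin C₀.EB,
      (∑ f ∈ Finset.univ.filter (fun f : Fin C.EB => C.segPts f = C₀.segPts e), C.mB f) = 1)
    (hsumray : ∀ e : Fin C₀.ER,
      (∑ f ∈ Finset.univ.filter (fun f : Fin C.ER => C.rayPts f = C₀.rayPts e), C.mR f) = 1) :
    (∀ u w : Fin C.V, C.InGamma' u → C.InGamma' w → C.pos u = C.pos w → u = w) ∧
    (∀ f g : Fin C.EB, 0 < C.blen f → 0 < C.blen g → f ≠ g →
      ∀ x ∈ C.segPts f ∩ C.segPts g, ∃ u, x = C.pos u ∧ C.IsEnd f u ∧ C.IsEnd g u) ∧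
    (∀ (f : Fin C.EB) (g : Fin C.ER), 0 < C.blen f →
      ∀ x ∈ C.segPts f ∩ C.rayPts g, ∃ u, x = C.pos u ∧ C.IsEnd f u ∧ C.rsrc g = u) ∧
    (∀ f g : Fin C.ER, f ≠ g →
      ∀ x ∈ C.rayPts f ∩ C.rayPts g, ∃ u, x = C.pos u ∧ C.rsrc f = u ∧ C.rsrc g = u) ∧
    (∀ (f : Fin C.EB) (u : Fin C.V), 0 < C.blen f → C.InGamma' u →
      C.pos u ∈ C.segPts f → C.IsEnd f u) ∧
    (∀ (f : Fin C.ER) (u : Fin C.V), C.InGamma' u →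
      C.pos u ∈ C.rayPts f → C.rsrc f = u) ∧
    ((⋃ f ∈ {f : Fin C.EB | 0 < C.blen f}, C.segPts f) ∪ (⋃ f : Fin C.ER, C.rayPts f)
      = C₀.EdgeImage) := by
  classical
  obtain ⟨hposinj₀, hSS₀, hSR₀, hRR₀, hVS₀, hVR₀⟩ := hemb₀
  have huniqseg : ∀ {f g : Fin C.EB} {e : Fin C₀.EB},
      C.segPts f = C₀.segPts e → C.segPts g = C₀.segPts e → f = g := by
    intro f g e hf hg
    by_contra hfg
    have hsub : ({f, g} : Finset (Fin C.EB)) ⊆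
        Finset.univ.filter (fun f : Fin C.EB => C.segPts f = C₀.segPts e) := by
      intro x hx
      rcases Finset.mem_insert.mp hx with rfl | hx
      · simp [hf]
      · rw [Finset.mem_singleton] at hx
        subst hx
        simp [hg]
    have h3 : (∑ x ∈ ({f, g} : Finset (Fin C.EB)), C.mB x)
        ≤ ∑ x ∈ Finset.univ.filter (fun f : Fin C.EB => C.segPts f = C₀.segPts e), C.mB x :=
      Finset.sum_le_sum_of_subset hsub
    rw [Finset.sum_pair hfg, hsumseg e] at h3
    have := hval.1 f
    have := hval.1 g
    omega
  have huniqray : ∀ {f g : Fin C.ER} {e : Fin C₀.ER},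
      C.rayPts f = C₀.rayPts e → C.rayPts g = C₀.rayPts e → f = g := by
    intro f g e hf hg
    by_contra hfg
    have hsub : ({f, g} : Finset (Fin C.ER)) ⊆
        Finset.univ.filter (fun f : Fin C.ER => C.rayPts f = C₀.rayPts e) := by
      intro x hx
      rcases Finset.mem_insert.mp hx with rfl | hx
      · simp [hf]
      · rw [Finset.mem_singleton] at hx
        subst hx
        simp [hg]
    have h3 : (∑ x ∈ ({f, g} : Finset (Fin C.ER)), C.mR x)
        ≤ ∑ x ∈ Finset.univ.filter (fun f : Fin C.ER => C.rayPts f = C₀.rayPts e), C.mR x :=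
      Finset.sum_le_sum_of_subset hsub
    rw [Finset.sum_pair hfg, hsumray e] at h3
    have := hval.2.1 f
    have := hval.2.1 g
    omega
  have hmapseg' : ∀ f : Fin C.EB, 0 < C.blen f → ∃ e : Fin C₀.EB, C.segPts f = C₀.segPts e :=
    fun f hf => (hmapseg f).resolve_left (fun h => by rw [h] at hf; exact lt_irrefl 0 hf)
  have hexseg : ∀ e : Fin C₀.EB, ∃ f, 0 < C.blen f ∧ C.segPts f = C₀.segPts e := by
    intro e
    have hne : (Finset.univ.filter fun f : Fin C.EB => C.segPts f = C₀.segPts e).Nonempty := by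
      by_contra h
      rw [Finset.not_nonempty_iff_eq_empty] at h
      have h2 := hsumseg e
      rw [h, Finset.sum_empty] at h2
      omega
    obtain ⟨f, hfmem⟩ := hne
    rw [Finset.mem_filter] at hfmem
    refine ⟨f, ?_, hfmem.2⟩
    rcases hval.2.2.2.1 f with h1 | h1
    · exact h1.1
    · exfalso
      have hsingle : ∀ x ∈ C.segPts f, x = C.pos (C.bsrc f) := by
        rintro x ⟨s, hs0, hsL, rfl⟩
        rw [h1.1] at hsL
        have hs : s = 0 := le_antisymm hsL hs0
        funext i
        rw [hs]
        simp
      have ha := hsingle _ (by rw [hfmem.2]; exact ZTC.mem_src hval₀ e)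
      have hb := hsingle _ (by rw [hfmem.2]; exact ZTC.mem_dst hval₀ e)
      exact ZTC.src_ne_dst hval₀ (hnocontr₀ e) (ha.trans hb.symm)
  have hexray : ∀ e : Fin C₀.ER, ∃ f, C.rayPts f = C₀.rayPts e := by
    intro e
    have hne : (Finset.univ.filter fun f : Fin C.ER => C.rayPts f = C₀.rayPts e).Nonempty := by
      by_contra h
      rw [Finset.not_nonempty_iff_eq_empty] at h
      have h2 := hsumray e
      rw [h, Finset.sum_empty] at h2
      omega
    obtain ⟨f, hfmem⟩ := hne
    rw [Finset.mem_filter] at hfmem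
    exact ⟨f, hfmem.2⟩
  have hvertpos : ∀ {u : Fin C.V}, C.InGamma' u → ∃ u₀, C.pos u = C₀.pos u₀ := by
    intro u hu
    rcases hu with ⟨f, hf, hend⟩ | ⟨f, hf⟩
    · obtain ⟨e, he⟩ := hmapseg' f hf
      rcases ZTC.seg_match hval hval₀ hf (hnocontr₀ e) he with ⟨h1, h2⟩ | ⟨h1, h2⟩ <;>
        rcases hend with h3 | h3
      · exact ⟨C₀.bsrc e, by rw [← h3]; exact h1⟩
      · exact ⟨C₀.bdst e, by rw [← h3]; exact h2⟩
      · exact ⟨C₀.bdst e, by rw [← h3]; exact h1⟩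
      · exact ⟨C₀.bsrc e, by rw [← h3]; exact h2⟩
    · obtain ⟨e, he⟩ := hmapray f
      obtain ⟨h1, _⟩ := ZTC.ray_match hval hval₀ he
      exact ⟨C₀.rsrc e, by rw [← hf]; exact h1⟩
  have hendpt : ∀ {f : Fin C.EB} {e : Fin C₀.EB} {u₀ : Fin C₀.V}, 0 < C.blen f →
      C.segPts f = C₀.segPts e → C₀.IsEnd e u₀ →
      ∃ v, C₀.pos u₀ = C.pos v ∧ C.IsEnd f v := by
    intro f e u₀ hf he hend
    rcases ZTC.seg_match hval hval₀ hf (hnocontr₀ e) he with ⟨h1, h2⟩ | ⟨h1, h2⟩ <;>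
      rcases hend with h3 | h3
    · exact ⟨C.bsrc f, by rw [← h3]; exact h1.symm, Or.inl rfl⟩
    · exact ⟨C.bdst f, by rw [← h3]; exact h2.symm, Or.inr rfl⟩
    · exact ⟨C.bdst f, by rw [← h3]; exact h2.symm, Or.inr rfl⟩
    · exact ⟨C.bsrc f, by rw [← h3]; exact h1.symm, Or.inl rfl⟩
  have part1 : ∀ u w : Fin C.V, C.InGamma' u → C.InGamma' w → C.pos u = C.pos w → u = w := by
    intro u w hu hw hpos
    by_contra huw
    obtain ⟨u₀, hxu₀⟩ := hvertpos hu
    have hxw : C.pos w = C₀.pos u₀ := hpos.symm.trans hxu₀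
    set F1u := Finset.univ.filter fun f : Fin C.EB => C.bsrc f = u ∧ 0 < C.blen f with hF1u
    set F2u := Finset.univ.filter fun f : Fin C.EB => C.bdst f = u ∧ 0 < C.blen f with hF2u
    set F3u := Finset.univ.filter fun r : Fin C.ER => C.rsrc r = u with hF3u
    set F1w := Finset.univ.filter fun f : Fin C.EB => C.bsrc f = w ∧ 0 < C.blen f with hF1w
    set F2w := Finset.univ.filter fun f : Fin C.EB => C.bdst f = w ∧ 0 < C.blen f with hF2w
    set F3w := Finset.univ.filter fun r : Fin C.ER => C.rsrc r = w with hF3w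
    set T1 := Finset.univ.filter fun e : Fin C₀.EB => C₀.bsrc e = u₀ with hT1
    set T2 := Finset.univ.filter fun e : Fin C₀.EB => C₀.bdst e = u₀ with hT2
    set T3 := Finset.univ.filter fun e : Fin C₀.ER => C₀.rsrc e = u₀ with hT3
    have hmapU : ∀ f ∈ ((F1u ∪ F2u) ∪ (F1w ∪ F2w)),
        ∃ e ∈ T1 ∪ T2, C.segPts f = C₀.segPts e := by
      intro f hfmem
      simp only [hF1u, hF2u, hF1w, hF2w, Finset.mem_union, Finset.mem_filter,
        Finset.mem_univ, true_and] at hfmem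
      have hflen : 0 < C.blen f := by tauto
      obtain ⟨e, he⟩ := hmapseg' f hflen
      refine ⟨e, ?_, he⟩
      have hxf : C.pos (C.bsrc f) = C₀.pos u₀ ∨ C.pos (C.bdst f) = C₀.pos u₀ := by
        rcases hfmem with (⟨h, _⟩ | ⟨h, _⟩) | (⟨h, _⟩ | ⟨h, _⟩)
        · exact Or.inl (by rw [h]; exact hxu₀)
        · exact Or.inr (by rw [h]; exact hxu₀)
        · exact Or.inl (by rw [h]; exact hxw)
        · exact Or.inr (by rw [h]; exact hxw)
      simp only [hT1, hT2, Finset.mem_union, Finset.mem_filter, Finset.mem_univ, true_and]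
      rcases ZTC.seg_match hval hval₀ hflen (hnocontr₀ e) he with ⟨h1, h2⟩ | ⟨h1, h2⟩ <;>
        rcases hxf with h3 | h3
      · exact Or.inl (hposinj₀ (h1.symm.trans h3))
      · exact Or.inr (hposinj₀ (h2.symm.trans h3))
      · exact Or.inr (hposinj₀ (h1.symm.trans h3))
      · exact Or.inl (hposinj₀ (h2.symm.trans h3))
    have hcardU : ((F1u ∪ F2u) ∪ (F1w ∪ F2w)).card ≤ (T1 ∪ T2).card :=
      card_le_of_rel _ hmapU (fun f₁ _ f₂ _ e h1 h2 => huniqseg h1 h2)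
    have hmapR : ∀ r ∈ F3u ∪ F3w, ∃ e ∈ T3, C.rayPts r = C₀.rayPts e := by
      intro r hrmem
      simp only [hF3u, hF3w, Finset.mem_union, Finset.mem_filter, Finset.mem_univ,
        true_and] at hrmem
      obtain ⟨e, he⟩ := hmapray r
      refine ⟨e, ?_, he⟩
      obtain ⟨h1, _⟩ := ZTC.ray_match hval hval₀ he
      simp only [hT3, Finset.mem_filter, Finset.mem_univ, true_and]
      apply hposinj₀
      rw [← h1]
      rcases hrmem with h | h
      · rw [h]; exact hxu₀
      · rw [h]; exact hxw
    have hcardR : (F3u ∪ F3w).card ≤ T3.card :=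
      card_le_of_rel _ hmapR (fun r₁ _ r₂ _ e h1 h2 => huniqray h1 h2)
    have hdisj12 : ∀ (A B : Finset (Fin C.EB)) (v v' : Fin C.V),
        A = Finset.univ.filter (fun f : Fin C.EB => C.bsrc f = v ∧ 0 < C.blen f) →
        B = Finset.univ.filter (fun f : Fin C.EB => C.bdst f = v' ∧ 0 < C.blen f) →
        C.pos v = C.pos v' → Disjoint A B := by
      intro A B v v' hA hB hvv'
      rw [Finset.disjoint_left]
      intro f hf1 hf2
      rw [hA, Finset.mem_filter] at hf1
      rw [hB, Finset.mem_filter] at hf2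
      exact ZTC.src_ne_dst hval hf1.2.2 (by rw [hf1.2.1, hf2.2.1]; exact hvv')
    have hdisj11 : Disjoint F1u F1w := by
      rw [Finset.disjoint_left]
      intro f h1 h2
      rw [hF1u, Finset.mem_filter] at h1
      rw [hF1w, Finset.mem_filter] at h2
      exact huw (h1.2.1.symm.trans h2.2.1)
    have hdisj22 : Disjoint F2u F2w := by
      rw [Finset.disjoint_left]
      intro f h1 h2
      rw [hF2u, Finset.mem_filter] at h1
      rw [hF2w, Finset.mem_filter] at h2
      exact huw (h1.2.1.symm.trans h2.2.1)
    have hdisj33 : Disjoint F3u F3w := by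
      rw [Finset.disjoint_left]
      intro r h1 h2
      rw [hF3u, Finset.mem_filter] at h1
      rw [hF3w, Finset.mem_filter] at h2
      exact huw (h1.2.symm.trans h2.2)
    have hbig : Disjoint (F1u ∪ F2u) (F1w ∪ F2w) := by
      rw [Finset.disjoint_union_left]
      constructor
      · rw [Finset.disjoint_union_right]
        exact ⟨hdisj11, hdisj12 F1u F2w u w hF1u hF2w hpos⟩
      · rw [Finset.disjoint_union_right]
        exact ⟨(hdisj12 F1w F2u w u hF1w hF2u hpos.symm).symm, hdisj22⟩
    have hcard1 : ((F1u ∪ F2u) ∪ (F1w ∪ F2w)).card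
        = (F1u.card + F2u.card) + (F1w.card + F2w.card) := by
      rw [Finset.card_union_of_disjoint hbig,
        Finset.card_union_of_disjoint (hdisj12 F1u F2u u u hF1u hF2u rfl),
        Finset.card_union_of_disjoint (hdisj12 F1w F2w w w hF1w hF2w rfl)]
    have hcard3 : (F3u ∪ F3w).card = F3u.card + F3w.card :=
      Finset.card_union_of_disjoint hdisj33
    have hTle : (T1 ∪ T2).card ≤ T1.card + T2.card := Finset.card_union_le _ _
    have hdeg : T1.card + T2.card + T3.card ≤ 3 := by
      have h4 := hdeg₀ u₀
      rw [ZTC.degree] at h4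
      exact h4
    have h2u := ZTC.two_le_darts hval hu
    have h2w := ZTC.two_le_darts hval hw
    rw [← hF1u, ← hF2u, ← hF3u] at h2u
    rw [← hF1w, ← hF2w, ← hF3w] at h2w
    omega
  refine ⟨part1, ?_, ?_, ?_, ?_, ?_, ?_⟩
  · intro f g hf hg hfg x hx
    obtain ⟨e, he⟩ := hmapseg' f hf
    obtain ⟨e', he'⟩ := hmapseg' g hg
    have hee' : e ≠ e' := fun hc => hfg (huniqseg he (by rw [hc]; exact he'))
    obtain ⟨u₀, hxu, hEe, hEe'⟩ := hSS₀ e e' hee' x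
      ⟨by rw [← he]; exact hx.1, by rw [← he']; exact hx.2⟩
    obtain ⟨v₁, hv₁, hEf⟩ := hendpt hf he hEe
    obtain ⟨v₂, hv₂, hEg⟩ := hendpt hg he' hEe'
    have hv12 : v₁ = v₂ := part1 _ _ (Or.inl ⟨f, hf, hEf⟩) (Or.inl ⟨g, hg, hEg⟩)
      (hv₁.symm.trans hv₂)
    exact ⟨v₁, hxu.trans hv₁, hEf, by rw [hv12]; exact hEg⟩
  · intro f g hf x hx
    obtain ⟨e, he⟩ := hmapseg' f hf
    obtain ⟨e', he'⟩ := hmapray g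
    obtain ⟨u₀, hxu, hEe, hre'⟩ := hSR₀ e e' x
      ⟨by rw [← he]; exact hx.1, by rw [← he']; exact hx.2⟩
    obtain ⟨v₁, hv₁, hEf⟩ := hendpt hf he hEe
    obtain ⟨h1, _⟩ := ZTC.ray_match hval hval₀ he'
    have h2 : C.pos (C.rsrc g) = C.pos v₁ := by rw [h1, hre']; exact hv₁
    have h3 : C.rsrc g = v₁ := part1 _ _ (Or.inr ⟨g, rfl⟩) (Or.inl ⟨f, hf, hEf⟩) h2
    exact ⟨v₁, hxu.trans hv₁, hEf, h3⟩
  · intro f g hfg x hx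
    obtain ⟨e, he⟩ := hmapray f
    obtain ⟨e', he'⟩ := hmapray g
    have hee' : e ≠ e' := fun hc => hfg (huniqray he (by rw [hc]; exact he'))
    obtain ⟨u₀, hxu, hre, hre'⟩ := hRR₀ e e' hee' x
      ⟨by rw [← he]; exact hx.1, by rw [← he']; exact hx.2⟩
    obtain ⟨h1, _⟩ := ZTC.ray_match hval hval₀ he
    obtain ⟨h1', _⟩ := ZTC.ray_match hval hval₀ he'
    have hf2 : C.pos (C.rsrc f) = C₀.pos u₀ := by rw [h1, hre]
    have hg2 : C.pos (C.rsrc g) = C₀.pos u₀ := by rw [h1', hre']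
    have h3 : C.rsrc f = C.rsrc g := part1 _ _ (Or.inr ⟨f, rfl⟩) (Or.inr ⟨g, rfl⟩)
      (hf2.trans hg2.symm)
    exact ⟨C.rsrc f, by rw [hxu]; exact hf2.symm, rfl, h3.symm⟩
  · intro f u hf hu hmem
    obtain ⟨e, he⟩ := hmapseg' f hf
    obtain ⟨u₀', hup⟩ := hvertpos hu
    have hm0 : C₀.pos u₀' ∈ C₀.segPts e := by rw [← he, ← hup]; exact hmem
    have hend := hVS₀ e u₀' hm0
    obtain ⟨v₁, hv₁, hEf⟩ := hendpt hf he hend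
    have h5 : u = v₁ := part1 _ _ hu (Or.inl ⟨f, hf, hEf⟩) (by rw [hup]; exact hv₁)
    rw [h5]
    exact hEf
  · intro f u hu hmem
    obtain ⟨e, he⟩ := hmapray f
    obtain ⟨u₀', hup⟩ := hvertpos hu
    have hm0 : C₀.pos u₀' ∈ C₀.rayPts e := by rw [← he, ← hup]; exact hmem
    have hre := hVR₀ e u₀' hm0
    obtain ⟨h1, _⟩ := ZTC.ray_match hval hval₀ he
    have h2 : C.pos (C.rsrc f) = C.pos u := by rw [h1, hre, ← hup]
    exact part1 _ _ (Or.inr ⟨f, rfl⟩) hu h2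
  · apply Set.eq_of_subset_of_subset
    · intro x hx
      simp only [ZTC.EdgeImage, Set.mem_union]
      rcases hx with hx | hx
      · rw [Set.mem_iUnion₂] at hx
        obtain ⟨f, hf, hxf⟩ := hx
        obtain ⟨e, he⟩ := hmapseg' f hf
        exact Or.inl (Set.mem_iUnion.mpr ⟨e, by rw [← he]; exact hxf⟩)
      · rw [Set.mem_iUnion] at hx
        obtain ⟨f, hxf⟩ := hx
        obtain ⟨e, he⟩ := hmapray f
        exact Or.inr (Set.mem_iUnion.mpr ⟨e, by rw [← he]; exact hxf⟩)
    · intro x hx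
      simp only [ZTC.EdgeImage, Set.mem_union, Set.mem_iUnion] at hx
      rcases hx with ⟨e, hxe⟩ | ⟨e, hxe⟩
      · obtain ⟨f, hf, hfe⟩ := hexseg e
        exact Or.inl (Set.mem_iUnion₂.mpr ⟨f, hf, by rw [hfe]; exact hxe⟩)
      · obtain ⟨f, hfe⟩ := hexray e
        exact Or.inr (Set.mem_iUnion.mpr ⟨f, by rw [hfe]; exact hxe⟩)
end

section
/- Let K be a field with a valuation v: K → ℚ ∪ {∞} and a compatible multiplicative section t, with residue field κ. Let I be an ideal of K[x_1^{±1}, …, x_n^{±1}] and w ∈ ℚ^n. Then the initial ideal In_w I contains a monomial (an element c x^λ with c ∈ κ, c ≠ 0) if and only if there exists f ∈ I such that In_w f is a monomial. -/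
open scoped Classical

/-- The finite value `v x ∈ ℚ` of the valuation (junk value `0` at `x = 0`). -/
noncomputable def valQ {K : Type*} (v : K → WithTop ℚ) (x : K) : ℚ := (v x).untopD 0

/-- The weight `v(f_λ) + ⟨λ, w⟩` of the term of `f` with exponent `λ`. -/
noncomputable def termWeight {K : Type*} [Field K] {n : ℕ} (v : K → WithTop ℚ)
    (w : Fin n → ℚ) (f : AddMonoidAlgebra K (Fin n → ℤ)) (lam : Fin n → ℤ) : WithTop ℚ :=
  v (f.coeff lam) + ((∑ i, (lam i : ℚ) * w i : ℚ) : WithTop ℚ)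

/-- The initial form `In_w f ∈ κ[x₁^{±1},…,x_n^{±1}]` of a Laurent polynomial
`f ∈ K[x₁^{±1},…,x_n^{±1}]`: the sum over the exponents `λ` of `f` minimizing
`v(f_λ) + ⟨λ, w⟩` of `[t^{-v(f_λ)} f_λ] x^λ`, where `t` is the multiplicative section of
the valuation and `π` is reduction to the residue field `κ`. -/
noncomputable def inw {K κ : Type*} [Field K] [Field κ] {n : ℕ}
    (v : K → WithTop ℚ) (t : ℚ → K) (π : K → κ) (w : Fin n → ℚ)
    (f : AddMonoidAlgebra K (Fin n → ℤ)) : AddMonoidAlgebra κ (Fin n → ℤ) :=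
  ∑ lam ∈ f.coeff.support.filter
      (fun lam => ∀ mu ∈ f.coeff.support, termWeight v w f lam ≤ termWeight v w f mu),
    AddMonoidAlgebra.single lam (π (t (-(valQ v (f.coeff lam))) * f.coeff lam))

/-- The initial ideal `In_w I ⊆ κ[x₁^{±1},…,x_n^{±1}]` of an ideal
`I ⊆ K[x₁^{±1},…,x_n^{±1}]`, generated by the initial forms of elements of `I`. -/
noncomputable def inwIdeal {K κ : Type*} [Field K] [Field κ] {n : ℕ}
    (v : K → WithTop ℚ) (t : ℚ → K) (π : K → κ) (w : Fin n → ℚ)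
    (I : Ideal (AddMonoidAlgebra K (Fin n → ℤ))) : Ideal (AddMonoidAlgebra κ (Fin n → ℤ)) :=
  Ideal.span {g | ∃ f ∈ I, g = inw v t π w f}

namespace InwAux

variable {K κ : Type*} [Field K] [Field κ] {n : ℕ}

def wdot {n : ℕ} (w : Fin n → ℚ) (lam : Fin n → ℤ) : ℚ := ∑ i, (lam i : ℚ) * w i

lemma wdot_add (w : Fin n → ℚ) (a b : Fin n → ℤ) :
    wdot w (a + b) = wdot w a + wdot w b := by
  simp only [wdot, Pi.add_apply, Int.cast_add, add_mul, Finset.sum_add_distrib]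

lemma tw_eq (v : K → WithTop ℚ) (w : Fin n → ℚ) (f : AddMonoidAlgebra K (Fin n → ℤ))
    (lam : Fin n → ℤ) : termWeight v w f lam = v (f.coeff lam) + (wdot w lam : WithTop ℚ) := rfl

lemma sum_single_apply (s : Finset (Fin n → ℤ)) (φ : (Fin n → ℤ) → κ) (mu : Fin n → ℤ) :
    (∑ lam ∈ s, AddMonoidAlgebra.single lam (φ lam)).coeff mu = if mu ∈ s then φ mu else 0 := by
  rw [AddMonoidAlgebra.coeff_sum, Finsupp.finset_sum_apply]
  simp only [AddMonoidAlgebra.coeff_single, Finsupp.single_apply]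
  exact Finset.sum_ite_eq' s mu φ

noncomputable def Rp (v : K → WithTop ℚ) (t : ℚ → K) (π : K → κ) (w : Fin n → ℚ)
    (f : AddMonoidAlgebra K (Fin n → ℤ)) : AddMonoidAlgebra κ (Fin n → ℤ) :=
  ∑ lam ∈ f.coeff.support, AddMonoidAlgebra.single lam (π (t (wdot w lam) * f.coeff lam))

lemma Rp_apply (v : K → WithTop ℚ) (t : ℚ → K) (π : K → κ) (hπ0 : π 0 = 0) (w : Fin n → ℚ)
    (f : AddMonoidAlgebra K (Fin n → ℤ)) (mu : Fin n → ℤ) :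
    (Rp v t π w f).coeff mu = π (t (wdot w mu) * f.coeff mu) := by
  rw [Rp, sum_single_apply]
  split
  · rfl
  · next h => rw [Finsupp.notMem_support_iff.mp h, mul_zero, hπ0]

end InwAux

namespace InwAux2
open InwAux

variable {K κ : Type*} [Field K] [Field κ] {n : ℕ}

lemma inw_coeff (v : K → WithTop ℚ) (hv0 : ∀ x : K, v x = ⊤ ↔ x = 0)
    (hvmul : ∀ x y : K, v (x * y) = v x + v y)
    (t : ℚ → K) (ht_val : ∀ a : ℚ, v (t a) = (a : WithTop ℚ))
    (π : K → κ) (hπ0 : π 0 = 0) (hπ_zero : ∀ x : K, 0 < v x → π x = 0)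
    (w : Fin n → ℚ) (f : AddMonoidAlgebra K (Fin n → ℤ)) (hf : f ≠ 0) :
    ∃ Wq : ℚ, (∀ lam ∈ f.coeff.support, (Wq : WithTop ℚ) ≤ termWeight v w f lam) ∧
      (∃ lam ∈ f.coeff.support, termWeight v w f lam = (Wq : WithTop ℚ)) ∧
      ∀ mu, (inw v t π w f).coeff mu = π (t (wdot w mu - Wq) * f.coeff mu) := by
  obtain ⟨lam0, hlam0, hmin⟩ := Finset.exists_min_image f.coeff.support (termWeight v w f)
    (Finsupp.support_nonempty_iff.mpr (fun h => hf (AddMonoidAlgebra.coeff_injective h)))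
  have hfl0 : f.coeff lam0 ≠ 0 := Finsupp.mem_support_iff.mp hlam0
  obtain ⟨q0, hq0⟩ : ∃ q0 : ℚ, v (f.coeff lam0) = (q0 : WithTop ℚ) := by
    cases h : v (f.coeff lam0) with
    | top => exact absurd ((hv0 _).mp h) hfl0
    | coe q => exact ⟨q, rfl⟩
  have htw0 : termWeight v w f lam0 = ((q0 + wdot w lam0 : ℚ) : WithTop ℚ) := by
    rw [tw_eq, hq0, ← WithTop.coe_add]
  refine ⟨q0 + wdot w lam0, ?_, ⟨lam0, hlam0, htw0⟩, ?_⟩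
  · intro lam hlam
    rw [← htw0]; exact hmin lam hlam
  · intro mu
    rw [inw, sum_single_apply]
    by_cases hsup : mu ∈ f.coeff.support
    · have hfmu : f.coeff mu ≠ 0 := Finsupp.mem_support_iff.mp hsup
      obtain ⟨q, hq⟩ : ∃ q : ℚ, v (f.coeff mu) = (q : WithTop ℚ) := by
        cases h : v (f.coeff mu) with
        | top => exact absurd ((hv0 _).mp h) hfmu
        | coe q => exact ⟨q, rfl⟩
      by_cases hminmu : ∀ nu ∈ f.coeff.support, termWeight v w f mu ≤ termWeight v w f nu
      · rw [if_pos (Finset.mem_filter.mpr ⟨hsup, hminmu⟩)]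
        have h1 : termWeight v w f mu = ((q0 + wdot w lam0 : ℚ) : WithTop ℚ) :=
          le_antisymm (htw0 ▸ hminmu lam0 hlam0) (htw0 ▸ hmin mu hsup)
        rw [tw_eq, hq, ← WithTop.coe_add] at h1
        have h2 : q + wdot w mu = q0 + wdot w lam0 := by exact_mod_cast h1
        have h3 : valQ v (f.coeff mu) = q := by rw [valQ, hq, WithTop.untopD_coe]
        have h4 : -(valQ v (f.coeff mu)) = wdot w mu - (q0 + wdot w lam0) := by
          rw [h3]; linarith
        rw [h4]
      · rw [if_neg (fun h => hminmu (Finset.mem_filter.mp h).2)]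
        symm; apply hπ_zero
        push_neg at hminmu
        obtain ⟨nu, hnu, hlt⟩ := hminmu
        have htwmu : termWeight v w f mu = ((q + wdot w mu : ℚ) : WithTop ℚ) := by
          rw [tw_eq, hq, ← WithTop.coe_add]
        have hlt2 : ((q0 + wdot w lam0 : ℚ) : WithTop ℚ) < ((q + wdot w mu : ℚ) : WithTop ℚ) := by
          rw [← htwmu]
          exact lt_of_le_of_lt (htw0 ▸ hmin nu hnu) hlt
        have hlt3 : q0 + wdot w lam0 < q + wdot w mu := by exact_mod_cast hlt2
        rw [hvmul, ht_val, hq, ← WithTop.coe_add]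
        exact_mod_cast (by linarith : (0:ℚ) < wdot w mu - (q0 + wdot w lam0) + q)
    · rw [if_neg (fun h => hsup (Finset.mem_filter.mp h).1)]
      rw [Finsupp.notMem_support_iff.mp hsup, mul_zero, hπ0]

end InwAux2

namespace InwAux3
open InwAux InwAux2

variable {K κ : Type*} [Field K] [Field κ] {n : ℕ}

lemma P_add (v : K → WithTop ℚ) (hvadd : ∀ x y : K, min (v x) (v y) ≤ v (x + y))
    (w : Fin n → ℚ) (f g : AddMonoidAlgebra K (Fin n → ℤ))
    (hf : ∀ lam, (0 : WithTop ℚ) ≤ termWeight v w f lam)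
    (hg : ∀ lam, (0 : WithTop ℚ) ≤ termWeight v w g lam) :
    ∀ lam, (0 : WithTop ℚ) ≤ termWeight v w (f + g) lam := by
  intro lam
  rw [tw_eq, AddMonoidAlgebra.coeff_add, Finsupp.add_apply]
  refine le_trans ?_ (add_le_add_left (hvadd (f.coeff lam) (g.coeff lam)) ((wdot w lam : WithTop ℚ)))
  rcases min_cases (v (f.coeff lam)) (v (g.coeff lam)) with ⟨h1, _⟩ | ⟨h1, _⟩ <;> rw [h1]
  · exact hf lam
  · exact hg lam

lemma Rp_zero (v : K → WithTop ℚ) (t : ℚ → K) (π : K → κ) (w : Fin n → ℚ) :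
    Rp v t π w (0 : AddMonoidAlgebra K (Fin n → ℤ)) = 0 := by simp [Rp]

lemma inw_zero (v : K → WithTop ℚ) (t : ℚ → K) (π : K → κ) (w : Fin n → ℚ) :
    inw v t π w (0 : AddMonoidAlgebra K (Fin n → ℤ)) = 0 := by simp [inw]

lemma P_zero (v : K → WithTop ℚ) (hv0 : ∀ x : K, v x = ⊤ ↔ x = 0) (w : Fin n → ℚ) :
    ∀ lam, (0 : WithTop ℚ) ≤ termWeight v w (0 : AddMonoidAlgebra K (Fin n → ℤ)) lam := by
  intro lam
  rw [tw_eq]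
  have : v ((0 : AddMonoidAlgebra K (Fin n → ℤ)).coeff lam) = ⊤ := (hv0 _).mpr rfl
  rw [this]
  exact le_top

lemma Rp_add (v : K → WithTop ℚ) (hvmul : ∀ x y : K, v (x * y) = v x + v y)
    (t : ℚ → K) (ht_val : ∀ a : ℚ, v (t a) = (a : WithTop ℚ))
    (π : K → κ) (hπ0 : π 0 = 0)
    (hπ_add : ∀ x y : K, 0 ≤ v x → 0 ≤ v y → π (x + y) = π x + π y)
    (w : Fin n → ℚ) (f g : AddMonoidAlgebra K (Fin n → ℤ))
    (hf : ∀ lam, (0 : WithTop ℚ) ≤ termWeight v w f lam)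
    (hg : ∀ lam, (0 : WithTop ℚ) ≤ termWeight v w g lam) :
    Rp v t π w (f + g) = Rp v t π w f + Rp v t π w g := by
  ext mu
  rw [AddMonoidAlgebra.coeff_add, Finsupp.add_apply, Rp_apply v t π hπ0, Rp_apply v t π hπ0,
    Rp_apply v t π hπ0, AddMonoidAlgebra.coeff_add, Finsupp.add_apply, mul_add]
  apply hπ_add
  · rw [hvmul, ht_val, add_comm]
    have := hf mu
    rw [tw_eq] at this
    exact this
  · rw [hvmul, ht_val, add_comm]
    have := hg mu
    rw [tw_eq] at this
    exact this

lemma gen_lemma (v : K → WithTop ℚ) (hv0 : ∀ x : K, v x = ⊤ ↔ x = 0)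
    (hvmul : ∀ x y : K, v (x * y) = v x + v y)
    (t : ℚ → K) (ht_hom : ∀ a b : ℚ, t (a + b) = t a * t b)
    (ht_val : ∀ a : ℚ, v (t a) = (a : WithTop ℚ))
    (π : K → κ) (hπ0 : π 0 = 0)
    (hπ_mul : ∀ x y : K, 0 ≤ v x → 0 ≤ v y → π (x * y) = π x * π y)
    (hπ_zero : ∀ x : K, 0 < v x → π x = 0)
    (hπ_surj : ∀ c : κ, ∃ x : K, 0 ≤ v x ∧ π x = c)
    (w : Fin n → ℚ) (f : AddMonoidAlgebra K (Fin n → ℤ)) (mu : Fin n → ℤ) (d : κ) :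
    ∃ b : K,
      (∀ lam, (0 : WithTop ℚ) ≤ termWeight v w (AddMonoidAlgebra.single mu b * f) lam) ∧
      Rp v t π w (AddMonoidAlgebra.single mu b * f)
        = AddMonoidAlgebra.single mu d * inw v t π w f := by
  by_cases hd : d = 0
  · have hz : AddMonoidAlgebra.single mu (0:K) * f = 0 := by
      have : AddMonoidAlgebra.single mu (0:K) = 0 := AddMonoidAlgebra.single_zero mu
      rw [this, zero_mul]
    refine ⟨0, ?_, ?_⟩
    · rw [hz]
      exact P_zero v hv0 w
    · have : AddMonoidAlgebra.single mu d = 0 := by rw [hd]; exact AddMonoidAlgebra.single_zero mu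
      rw [hz, Rp_zero, this, zero_mul]
  by_cases hf : f = 0
  · subst hf
    refine ⟨0, ?_, ?_⟩
    · rw [mul_zero]
      exact P_zero v hv0 w
    · rw [mul_zero, Rp_zero, inw_zero, mul_zero]
  obtain ⟨Wq, hmin, -, hcoeff⟩ := inw_coeff v hv0 hvmul t ht_val π hπ0 hπ_zero w f hf
  obtain ⟨D, hD0, hDd⟩ := hπ_surj d
  set b := t (-(wdot w mu) - Wq) * D with hb
  refine ⟨b, ?_, ?_⟩
  · intro lam
    have hslam : wdot w lam = wdot w mu + wdot w (-mu + lam) := by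
      rw [← wdot_add]
      congr 1
      exact (add_neg_cancel_left mu lam).symm
    rw [tw_eq, AddMonoidAlgebra.coeff_single_mul_apply]
    by_cases hfnu : f.coeff (-mu + lam) = 0
    · rw [hfnu, mul_zero, (hv0 (0:K)).mpr rfl]
      exact le_top
    · obtain ⟨q, hq⟩ : ∃ q : ℚ, v (f.coeff (-mu + lam)) = (q : WithTop ℚ) := by
        cases h : v (f.coeff (-mu + lam)) with
        | top => exact absurd ((hv0 _).mp h) hfnu
        | coe q => exact ⟨q, rfl⟩
      have hW : (Wq : WithTop ℚ) ≤ ((q + wdot w (-mu + lam) : ℚ) : WithTop ℚ) := by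
        have := hmin _ (Finsupp.mem_support_iff.mpr hfnu)
        rw [tw_eq, hq, ← WithTop.coe_add] at this
        exact this
      have hW' : Wq ≤ q + wdot w (-mu + lam) := by exact_mod_cast hW
      have hvD : ∃ e : ℚ, v D = (e : WithTop ℚ) ∧ 0 ≤ e := by
        cases h : v D with
        | top =>
            exfalso
            have hD : D = 0 := (hv0 D).mp h
            rw [hD, hπ0] at hDd
            exact hd hDd.symm
        | coe e =>
            refine ⟨e, rfl, ?_⟩
            rw [h] at hD0
            exact_mod_cast hD0
      obtain ⟨e, hvD, he⟩ := hvD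
      rw [hvmul, hb, hvmul, ht_val, hq, hvD, hslam]
      exact_mod_cast (show (0:ℚ) ≤ -(wdot w mu) - Wq + e + q + (wdot w mu + wdot w (-mu + lam))
        by linarith)
  · ext lam
    rw [Rp_apply v t π hπ0, AddMonoidAlgebra.coeff_single_mul_apply,
      AddMonoidAlgebra.coeff_single_mul_apply, hcoeff]
    have hslam : wdot w lam = wdot w mu + wdot w (-mu + lam) := by
      rw [← wdot_add]
      congr 1
      exact (add_neg_cancel_left mu lam).symm
    have key : t (wdot w lam) * (b * f.coeff (-mu + lam))
        = D * (t (wdot w (-mu + lam) - Wq) * f.coeff (-mu + lam)) := by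
      rw [hb]
      have ht : t (wdot w lam) * t (-(wdot w mu) - Wq) = t (wdot w (-mu + lam) - Wq) := by
        rw [← ht_hom]
        congr 1
        rw [hslam]
        ring
      rw [← ht]
      ring
    have hy : (0 : WithTop ℚ) ≤ v (t (wdot w (-mu + lam) - Wq) * f.coeff (-mu + lam)) := by
      by_cases hfnu : f.coeff (-mu + lam) = 0
      · rw [hfnu, mul_zero, (hv0 (0:K)).mpr rfl]
        exact le_top
      · obtain ⟨q, hq⟩ : ∃ q : ℚ, v (f.coeff (-mu + lam)) = (q : WithTop ℚ) := by
          cases h : v (f.coeff (-mu + lam)) with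
          | top => exact absurd ((hv0 _).mp h) hfnu
          | coe q => exact ⟨q, rfl⟩
        have hW : (Wq : WithTop ℚ) ≤ ((q + wdot w (-mu + lam) : ℚ) : WithTop ℚ) := by
          have := hmin _ (Finsupp.mem_support_iff.mpr hfnu)
          rw [tw_eq, hq, ← WithTop.coe_add] at this
          exact this
        have hW' : Wq ≤ q + wdot w (-mu + lam) := by exact_mod_cast hW
        rw [hvmul, ht_val, hq]
        exact_mod_cast (show (0:ℚ) ≤ wdot w (-mu + lam) - Wq + q by linarith)
    rw [key, hπ_mul D _ hD0 hy, hDd]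
end InwAux3

namespace InwAux4
open InwAux InwAux2 InwAux3

variable {K κ : Type*} [Field K] [Field κ] {n : ℕ}

lemma Rp_ne_imp (v : K → WithTop ℚ) (hv0 : ∀ x : K, v x = ⊤ ↔ x = 0)
    (hvmul : ∀ x y : K, v (x * y) = v x + v y)
    (t : ℚ → K) (ht_val : ∀ a : ℚ, v (t a) = (a : WithTop ℚ))
    (π : K → κ) (hπ0 : π 0 = 0) (hπ_zero : ∀ x : K, 0 < v x → π x = 0)
    (w : Fin n → ℚ) (g : AddMonoidAlgebra K (Fin n → ℤ))
    (hP : ∀ lam, (0 : WithTop ℚ) ≤ termWeight v w g lam)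
    (hR : Rp v t π w g ≠ 0) :
    inw v t π w g = Rp v t π w g := by
  have hg : g ≠ 0 := by rintro rfl; exact hR (Rp_zero v t π w)
  obtain ⟨Wq, hmin, ⟨lam0, hlam0, htw0⟩, hcoeff⟩ :=
    inw_coeff v hv0 hvmul t ht_val π hπ0 hπ_zero w g hg
  have h1 : (0:ℚ) ≤ Wq := by
    have := hP lam0
    rw [htw0] at this
    exact_mod_cast this
  obtain ⟨mu1, hmu1⟩ : ∃ mu, (Rp v t π w g).coeff mu ≠ 0 := by
    by_contra h
    push_neg at h
    exact hR (AddMonoidAlgebra.coeff_injective (Finsupp.ext h))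
  rw [Rp_apply v t π hπ0] at hmu1
  have hgmu1 : g.coeff mu1 ≠ 0 := fun h => hmu1 (by rw [h, mul_zero, hπ0])
  obtain ⟨q, hq⟩ : ∃ q : ℚ, v (g.coeff mu1) = (q : WithTop ℚ) := by
    cases h : v (g.coeff mu1) with
    | top => exact absurd ((hv0 _).mp h) hgmu1
    | coe q => exact ⟨q, rfl⟩
  have h2 : ¬ (0 < v (t (wdot w mu1) * g.coeff mu1)) := fun h => hmu1 (hπ_zero _ h)
  rw [hvmul, ht_val, hq, ← WithTop.coe_add] at h2
  have h2' : wdot w mu1 + q ≤ 0 := by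
    by_contra hcon
    push_neg at hcon
    exact h2 (by exact_mod_cast hcon)
  have h3 : Wq ≤ q + wdot w mu1 := by
    have := hmin mu1 (Finsupp.mem_support_iff.mpr hgmu1)
    rw [tw_eq, hq, ← WithTop.coe_add] at this
    exact_mod_cast this
  have hW0 : Wq = 0 := le_antisymm (by linarith) h1
  ext mu
  rw [hcoeff mu, Rp_apply v t π hπ0, hW0, sub_zero]

theorem main
    (v : K → WithTop ℚ)
    (hv0 : ∀ x : K, v x = ⊤ ↔ x = 0)
    (hvmul : ∀ x y : K, v (x * y) = v x + v y)
    (hvadd : ∀ x y : K, min (v x) (v y) ≤ v (x + y))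
    (t : ℚ → K)
    (ht_hom : ∀ a b : ℚ, t (a + b) = t a * t b)
    (ht_val : ∀ a : ℚ, v (t a) = (a : WithTop ℚ))
    (π : K → κ)
    (hπ_add : ∀ x y : K, 0 ≤ v x → 0 ≤ v y → π (x + y) = π x + π y)
    (hπ_mul : ∀ x y : K, 0 ≤ v x → 0 ≤ v y → π (x * y) = π x * π y)
    (hπ_one : π 1 = 1)
    (hπ_zero : ∀ x : K, 0 < v x → π x = 0)
    (hπ_unit : ∀ x : K, v x = 0 → π x ≠ 0)
    (hπ_surj : ∀ c : κ, ∃ x : K, 0 ≤ v x ∧ π x = c)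
    (I : Ideal (AddMonoidAlgebra K (Fin n → ℤ))) (w : Fin n → ℚ) :
    (∃ (lam : Fin n → ℤ) (c : κ), c ≠ 0 ∧
        AddMonoidAlgebra.single lam c ∈ Ideal.span {g | ∃ f ∈ I, g = inw v t π w f}) ↔
      (∃ f ∈ I, ∃ (lam : Fin n → ℤ) (c : κ), c ≠ 0 ∧
        inw v t π w f = AddMonoidAlgebra.single lam c) := by
  have hv00 : (0 : WithTop ℚ) ≤ v 0 := by rw [(hv0 0).mpr rfl]; exact le_top
  have hπ0 : π 0 = 0 := by
    have h := hπ_add 0 0 hv00 hv00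
    rw [add_zero] at h
    exact left_eq_add.mp h
  constructor
  · rintro ⟨lam, c, hc, hmem⟩
    obtain ⟨co, hsupp, hsum⟩ := Submodule.mem_span_set.mp hmem
    set Q : AddMonoidAlgebra κ (Fin n → ℤ) → Prop := fun h =>
      ∃ G ∈ I, (∀ lam, (0 : WithTop ℚ) ≤ termWeight v w G lam) ∧ Rp v t π w G = h with hQdef
    have hQ0 : Q 0 := ⟨0, I.zero_mem, P_zero v hv0 w, Rp_zero v t π w⟩
    have hQadd : ∀ a b, Q a → Q b → Q (a + b) := by
      rintro a b ⟨G1, hG1, hP1, hR1⟩ ⟨G2, hG2, hP2, hR2⟩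
      exact ⟨G1 + G2, I.add_mem hG1 hG2, P_add v hvadd w G1 G2 hP1 hP2, by
        rw [Rp_add v hvmul t ht_val π hπ0 hπ_add w G1 G2 hP1 hP2, hR1, hR2]⟩
    have hQsum : Q (co.sum fun mi r => r • mi) := by
      rw [Finsupp.sum]
      apply Finset.sum_induction _ Q hQadd hQ0
      intro mi hmi
      obtain ⟨f, hfI, rfl⟩ := hsupp hmi
      rw [smul_eq_mul]
      have hexp : co (inw v t π w f) * inw v t π w f
          = ∑ mu ∈ (co (inw v t π w f)).coeff.support,
              AddMonoidAlgebra.single mu ((co (inw v t π w f)).coeff mu) * inw v t π w f := by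
        conv_lhs => rw [← AddMonoidAlgebra.sum_coeff_single (co (inw v t π w f)), Finsupp.sum_mul]
        rfl
      rw [hexp]
      apply Finset.sum_induction _ Q hQadd hQ0
      intro mu _
      obtain ⟨b, hPb, hRb⟩ := gen_lemma v hv0 hvmul t ht_hom ht_val π hπ0 hπ_mul hπ_zero
        hπ_surj w f mu ((co (inw v t π w f)).coeff mu)
      exact ⟨AddMonoidAlgebra.single mu b * f, I.mul_mem_left _ hfI, hPb, hRb⟩
    rw [hsum] at hQsum
    obtain ⟨G, hGI, hPG, hRG⟩ := hQsum
    refine ⟨G, hGI, lam, c, hc, ?_⟩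
    rw [Rp_ne_imp v hv0 hvmul t ht_val π hπ0 hπ_zero w G hPG
      (by rw [hRG]; exact fun hz => hc (AddMonoidAlgebra.single_eq_zero.mp hz)), hRG]
  · rintro ⟨f, hfI, lam, c, hc, hform⟩
    refine ⟨lam, c, hc, ?_⟩
    rw [← hform]
    exact Ideal.subset_span ⟨f, hfI, rfl⟩

end InwAux4

/-- Let `K` be a field with valuation `v : K → ℚ ∪ {∞}`, a compatible
multiplicative section `t`, and residue field `κ` with reduction `π`.  Let `I` be an ideal
of `K[x₁^{±1},…,x_n^{±1}]` and `w ∈ ℚ^n`.  Then `In_w I` contains a monomial if and only if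
there exists `f ∈ I` such that `In_w f` is a monomial. -/
theorem initial_ideal_monomial_iff_initial_form_monomial
    {K κ : Type*} [Field K] [Field κ] {n : ℕ}
    (v : K → WithTop ℚ)
    (hv0 : ∀ x : K, v x = ⊤ ↔ x = 0)
    (hvmul : ∀ x y : K, v (x * y) = v x + v y)
    (hvadd : ∀ x y : K, min (v x) (v y) ≤ v (x + y))
    (t : ℚ → K)
    (ht_hom : ∀ a b : ℚ, t (a + b) = t a * t b)
    (ht_val : ∀ a : ℚ, v (t a) = (a : WithTop ℚ))
    (π : K → κ)
    (hπ_add : ∀ x y : K, 0 ≤ v x → 0 ≤ v y → π (x + y) = π x + π y)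
    (hπ_mul : ∀ x y : K, 0 ≤ v x → 0 ≤ v y → π (x * y) = π x * π y)
    (hπ_one : π 1 = 1)
    (hπ_zero : ∀ x : K, 0 < v x → π x = 0)
    (hπ_unit : ∀ x : K, v x = 0 → π x ≠ 0)
    (hπ_surj : ∀ c : κ, ∃ x : K, 0 ≤ v x ∧ π x = c)
    (I : Ideal (AddMonoidAlgebra K (Fin n → ℤ))) (w : Fin n → ℚ) :
    (∃ (lam : Fin n → ℤ) (c : κ), c ≠ 0 ∧
        AddMonoidAlgebra.single lam c ∈ inwIdeal v t π w I) ↔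
      (∃ f ∈ I, ∃ (lam : Fin n → ℤ) (c : κ), c ≠ 0 ∧
        inw v t π w f = AddMonoidAlgebra.single lam c) := by
  exact InwAux4.main v hv0 hvmul hvadd t ht_hom ht_val π hπ_add hπ_mul hπ_one hπ_zero
    hπ_unit hπ_surj I w
end

section
/- Let κ be a field, let J be an ideal of the Laurent polynomial ring κ[x_1^{±1}, …, x_n^{±1}], and let u ∈ ℤ^n. If In_u J = J, then J is invariant under the one-parameter torus action in direction u: for every s ∈ κ^*, the κ-algebra automorphism of κ[x_1^{±1}, …, x_n^{±1}] determined by x^λ ↦ s^{⟨u, λ⟩} x^λ maps J onto J. -/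
open scoped Classical

/-- The pairing `⟨u, λ⟩ = Σᵢ uᵢ λᵢ` on `ℤ^n`. -/
def intDot {n : ℕ} (u lam : Fin n → ℤ) : ℤ := ∑ i, u i * lam i

/-- The initial form `In_u f` of a Laurent polynomial
`f ∈ κ[x₁^{±1}, …, x_n^{±1}]` (encoded as `AddMonoidAlgebra κ (Fin n → ℤ)`) with respect to
`u ∈ ℤ^n` and the trivial valuation: the sum of the terms of `f` whose exponents minimize
`⟨λ, u⟩`. -/
noncomputable def initialForm {κ : Type*} [Field κ] {n : ℕ} (u : Fin n → ℤ)
    (f : AddMonoidAlgebra κ (Fin n → ℤ)) : AddMonoidAlgebra κ (Fin n → ℤ) :=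
  ∑ lam ∈ f.coeff.support.filter (fun lam => ∀ mu ∈ f.coeff.support, intDot u lam ≤ intDot u mu),
    AddMonoidAlgebra.single lam (f.coeff lam)

/-- The initial ideal `In_u J`, generated by all `In_u f` with `f ∈ J`. -/
noncomputable def initialIdeal {κ : Type*} [Field κ] {n : ℕ} (u : Fin n → ℤ)
    (J : Ideal (AddMonoidAlgebra κ (Fin n → ℤ))) : Ideal (AddMonoidAlgebra κ (Fin n → ℤ)) :=
  Ideal.span {g | ∃ f ∈ J, g = initialForm u f}

/-- The action of `s ∈ κ^*` on Laurent polynomials through the one-parameter subgroup in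
direction `u`: the map determined by `x^λ ↦ s^{⟨u,λ⟩} x^λ`. -/
noncomputable def torusScale {κ : Type*} [Field κ] {n : ℕ} (u : Fin n → ℤ) (s : κˣ)
    (f : AddMonoidAlgebra κ (Fin n → ℤ)) : AddMonoidAlgebra κ (Fin n → ℤ) :=
  f.coeff.sum fun lam c => AddMonoidAlgebra.single lam (((s : κ) ^ (intDot u lam)) * c)

lemma torusScale_apply {κ : Type*} [Field κ] {n : ℕ} (u : Fin n → ℤ) (s : κˣ)
    (f : AddMonoidAlgebra κ (Fin n → ℤ)) (mu : Fin n → ℤ) :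
    (torusScale u s f).coeff mu = (s : κ) ^ (intDot u mu) * f.coeff mu := by
  classical
  unfold torusScale
  rw [AddMonoidAlgebra.coeff_finsuppSum, Finsupp.sum_apply]
  simp only [AddMonoidAlgebra.coeff_single, Finsupp.single_apply]
  rw [Finsupp.sum_ite_eq' f.coeff mu (fun lam c => (s : κ) ^ (intDot u lam) * c)]
  by_cases hmu : mu ∈ f.coeff.support
  · simp [hmu]
  · simp [hmu, Finsupp.notMem_support_iff.mp hmu]

lemma initialForm_apply {κ : Type*} [Field κ] {n : ℕ} (u : Fin n → ℤ)
    (f : AddMonoidAlgebra κ (Fin n → ℤ)) (mu : Fin n → ℤ) :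
    (initialForm u f).coeff mu =
      if mu ∈ f.coeff.support.filter (fun lam => ∀ nu ∈ f.coeff.support, intDot u lam ≤ intDot u nu)
      then f.coeff mu else 0 := by
  classical
  unfold initialForm
  rw [AddMonoidAlgebra.coeff_sum, Finset.sum_apply']
  simp only [AddMonoidAlgebra.coeff_single, Finsupp.single_apply]
  exact Finset.sum_ite_eq' _ mu (fun lam => f.coeff lam)

lemma torusScale_mem {κ : Type*} [Field κ] {n : ℕ} (u : Fin n → ℤ)
    (J : Ideal (AddMonoidAlgebra κ (Fin n → ℤ)))
    (h : initialIdeal u J = J) (s : κˣ) :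
    ∀ (N : ℕ) (f : AddMonoidAlgebra κ (Fin n → ℤ)), f.coeff.support.card ≤ N → f ∈ J →
      torusScale u s f ∈ J := by
  classical
  intro N
  induction N with
  | zero =>
    intro f hcard _
    have hf0 : f = 0 := by
      rwa [Nat.le_zero, Finset.card_eq_zero, Finsupp.support_eq_empty, AddMonoidAlgebra.coeff_eq_zero] at hcard
    have : torusScale u s f = 0 := by
      ext mu; simp [torusScale_apply, hf0]
    rw [this]; exact J.zero_mem
  | succ N ih =>
    intro f hcard hf
    by_cases hf0 : f = 0
    · have : torusScale u s f = 0 := by ext mu; simp [torusScale_apply, hf0]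
      rw [this]; exact J.zero_mem
    -- the set of minimizers
    set S := f.coeff.support.filter (fun lam => ∀ nu ∈ f.coeff.support, intDot u lam ≤ intDot u nu) with hS
    have hsupp : f.coeff.support.Nonempty :=
      Finsupp.support_nonempty_iff.mpr (by rwa [Ne, AddMonoidAlgebra.coeff_eq_zero])
    obtain ⟨lam₀, hlam₀, hmin⟩ := Finset.exists_min_image f.coeff.support (intDot u) hsupp
    have hlam₀S : lam₀ ∈ S := by
      rw [hS, Finset.mem_filter]; exact ⟨hlam₀, hmin⟩
    have hIn : initialForm u f ∈ J := by
      rw [← h]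
      exact Ideal.subset_span ⟨f, hf, rfl⟩
    -- torusScale of the initial form is a constant multiple of it
    have hTIn : torusScale u s (initialForm u f)
        = AddMonoidAlgebra.single (0 : Fin n → ℤ) ((s : κ) ^ (intDot u lam₀))
          * initialForm u f := by
      ext mu
      rw [torusScale_apply, AddMonoidAlgebra.coeff_single_zero_mul]
      by_cases hmu : mu ∈ S
      · have hmu' := hmu
        rw [hS, Finset.mem_filter] at hmu'
        have h1 : intDot u mu ≤ intDot u lam₀ := hmu'.2 lam₀ hlam₀
        have h2 : intDot u lam₀ ≤ intDot u mu := hmin mu hmu'.1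
        rw [le_antisymm h1 h2]
      · rw [initialForm_apply, if_neg (by rw [hS] at hmu; exact hmu), mul_zero, mul_zero]
    have hTInJ : torusScale u s (initialForm u f) ∈ J := by
      rw [hTIn]; exact Ideal.mul_mem_left _ _ hIn
    -- the remainder
    set g := f - initialForm u f with hg
    have hgJ : g ∈ J := J.sub_mem hf hIn
    have hgsupp : g.coeff.support ⊆ f.coeff.support \ {lam₀} := by
      intro mu hmu
      rw [Finsupp.mem_support_iff] at hmu
      have hgval : g.coeff mu = if mu ∈ S then 0 else f.coeff mu := by
        rw [hg, AddMonoidAlgebra.coeff_sub, Finsupp.sub_apply, initialForm_apply, ← hS]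
        by_cases hmu' : mu ∈ S <;> simp [hmu']
      rw [hgval] at hmu
      by_cases hmu' : mu ∈ S
      · simp [hmu'] at hmu
      · rw [if_neg hmu'] at hmu
        refine Finset.mem_sdiff.mpr ⟨Finsupp.mem_support_iff.mpr hmu, ?_⟩
        simp only [Finset.mem_singleton]
        rintro rfl; exact hmu' hlam₀S
    have hgcard : g.coeff.support.card ≤ N := by
      have h1 : (f.coeff.support \ {lam₀}).card ≤ N := by
        rw [Finset.card_sdiff_of_subset (by simpa using hlam₀)]
        simp only [Finset.card_singleton]
        omega
      exact le_trans (Finset.card_le_card hgsupp) h1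
    have hTg : torusScale u s g ∈ J := ih g hgcard hgJ
    have : torusScale u s f = torusScale u s (initialForm u f) + torusScale u s g := by
      ext mu
      rw [AddMonoidAlgebra.coeff_add, Finsupp.add_apply, torusScale_apply, torusScale_apply,
        torusScale_apply, AddMonoidAlgebra.coeff_sub, Finsupp.sub_apply]
      ring
    rw [this]
    exact J.add_mem hTInJ hTg

/-- Let `κ` be a field, `J` an ideal of `κ[x₁^{±1}, …, x_n^{±1}]` and
`u ∈ ℤ^n`.  If `In_u J = J` then `J` is invariant under the one-parameter torus action in
direction `u`: for every `s ∈ κ^*`, the map determined by `x^λ ↦ s^{⟨u,λ⟩} x^λ` maps `J`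
onto `J`. -/
theorem initial_fixed_implies_torus_invariant
    {κ : Type*} [Field κ] {n : ℕ} (u : Fin n → ℤ)
    (J : Ideal (AddMonoidAlgebra κ (Fin n → ℤ)))
    (h : initialIdeal u J = J) :
    ∀ s : κˣ, torusScale u s '' (J : Set (AddMonoidAlgebra κ (Fin n → ℤ)))
      = (J : Set (AddMonoidAlgebra κ (Fin n → ℤ))) := by
  intro s
  have key : ∀ (t : κˣ) (f : AddMonoidAlgebra κ (Fin n → ℤ)), f ∈ J → torusScale u t f ∈ J :=
    fun t f hf => torusScale_mem u J h t f.coeff.support.card f le_rfl hf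
  apply Set.eq_of_subset_of_subset
  · rintro g ⟨f, hf, rfl⟩
    exact key s f hf
  · intro g hg
    refine ⟨torusScale u s⁻¹ g, key s⁻¹ g hg, ?_⟩
    ext mu
    rw [torusScale_apply, torusScale_apply]
    rw [← mul_assoc]
    have hs : ((s : κ)) ^ (intDot u mu) ≠ 0 := zpow_ne_zero _ s.ne_zero
    rw [Units.val_inv_eq_inv_val, inv_zpow, mul_inv_cancel₀ hs, one_mul]
end

section
/- Let κ be a field and let I be an ideal of the Laurent polynomial ring κ[x_1^{±1}, …, x_n^{±1}]. For a Laurent polynomial g, let In_{e_n} g be the sum of the terms of g whose exponent of x_n is minimal. Then for every f ∈ κ[x_1^{±1}, …, x_{n-1}^{±1}] (a Laurent polynomial not involving x_n), f belongs to the ideal of κ[x_1^{±1}, …, x_n^{±1}] generated by {In_{e_n} g : g ∈ I} if and only if there exist d ≥ 0 and f_1, …, f_d ∈ κ[x_1^{±1}, …, x_{n-1}^{±1}] such that f + x_n f_1 + ⋯ + x_n^d f_d ∈ I. -/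
open scoped Classical

/-- The initial form `In_{e_n} g` of a Laurent polynomial
`g ∈ κ[x₁^{±1}, …, x_{n+1}^{±1}]` (encoded as `AddMonoidAlgebra κ (Fin (n+1) → ℤ)`):
the sum of the terms of `g` whose exponent of the last variable is minimal. -/
noncomputable def initialFormLast {κ : Type*} [Field κ] {n : ℕ}
    (g : AddMonoidAlgebra κ (Fin (n + 1) → ℤ)) : AddMonoidAlgebra κ (Fin (n + 1) → ℤ) :=
  ∑ lam ∈ g.coeff.support.filter
      (fun lam => ∀ mu ∈ g.coeff.support, lam (Fin.last n) ≤ mu (Fin.last n)),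
    AddMonoidAlgebra.single lam (g.coeff lam)

section Aux

variable {κ : Type*} [Field κ] {n : ℕ}

/-- Degree-`m` component with respect to the last exponent. -/
noncomputable def compL (m : ℤ) (g : AddMonoidAlgebra κ (Fin (n + 1) → ℤ)) :
    AddMonoidAlgebra κ (Fin (n + 1) → ℤ) :=
  AddMonoidAlgebra.ofCoeff (Finsupp.filter (fun lam => lam (Fin.last n) = m) g.coeff)

lemma compL_apply (m : ℤ) (g : AddMonoidAlgebra κ (Fin (n + 1) → ℤ)) (x : Fin (n + 1) → ℤ) :
    (compL m g).coeff x = if x (Fin.last n) = m then g.coeff x else 0 := by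
  simp [compL, Finsupp.filter_apply]

lemma finsupp_sum_apply {ι : Type*} (s : Finset ι)
    (F : ι → AddMonoidAlgebra κ (Fin (n + 1) → ℤ)) (x : Fin (n + 1) → ℤ) :
    (∑ i ∈ s, F i).coeff x = ∑ i ∈ s, (F i).coeff x := by
  rw [AddMonoidAlgebra.coeff_sum, Finsupp.finset_sum_apply]

lemma compL_eq_self {m : ℤ} {g : AddMonoidAlgebra κ (Fin (n + 1) → ℤ)}
    (h : ∀ x ∈ g.coeff.support, x (Fin.last n) = m) : compL m g = g := by
  ext x
  rw [compL_apply]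
  split_ifs with hx
  · rfl
  · symm
    rw [← Finsupp.notMem_support_iff]
    exact fun hs => hx (h x hs)

lemma compL_eq_zero {m : ℤ} {g : AddMonoidAlgebra κ (Fin (n + 1) → ℤ)}
    (h : ∀ x ∈ g.coeff.support, x (Fin.last n) ≠ m) : compL m g = 0 := by
  ext x
  rw [compL_apply]
  split_ifs with hx
  · by_contra hne
    exact h x (Finsupp.mem_support_iff.mpr (by simpa using hne)) hx
  · rfl

lemma mem_support_compL {m : ℤ} {g : AddMonoidAlgebra κ (Fin (n + 1) → ℤ)}
    {x : Fin (n + 1) → ℤ} (hx : x ∈ (compL m g).coeff.support) :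
    x ∈ g.coeff.support ∧ x (Fin.last n) = m := by
  rw [Finsupp.mem_support_iff, compL_apply] at hx
  split_ifs at hx with h
  · exact ⟨Finsupp.mem_support_iff.mpr hx, h⟩
  · exact absurd rfl hx

lemma compL_add (m : ℤ) (g h : AddMonoidAlgebra κ (Fin (n + 1) → ℤ)) :
    compL m (g + h) = compL m g + compL m h :=
  by unfold compL; rw [AddMonoidAlgebra.coeff_add, Finsupp.filter_add]; rfl

lemma compL_zero (m : ℤ) : compL m (0 : AddMonoidAlgebra κ (Fin (n + 1) → ℤ)) = 0 := by
  ext x; rw [compL_apply]; simp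

lemma compL_sum {ι : Type*} (m : ℤ) (s : Finset ι)
    (F : ι → AddMonoidAlgebra κ (Fin (n + 1) → ℤ)) :
    compL m (∑ i ∈ s, F i) = ∑ i ∈ s, compL m (F i) := by
  induction s using Finset.induction with
  | empty => simp [compL_zero]
  | insert _ _ h ih => rw [Finset.sum_insert h, Finset.sum_insert h, compL_add, ih]

lemma compL_single_mul (m : ℤ) (u : Fin (n + 1) → ℤ) (c : κ)
    (g : AddMonoidAlgebra κ (Fin (n + 1) → ℤ)) :
    compL m (AddMonoidAlgebra.single u c * g)
      = AddMonoidAlgebra.single u c * compL (m - u (Fin.last n)) g := by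
  ext x
  rw [compL_apply, AddMonoidAlgebra.coeff_single_mul_apply, AddMonoidAlgebra.coeff_single_mul_apply,
    compL_apply]
  have hx : (-u + x) (Fin.last n) = -(u (Fin.last n)) + x (Fin.last n) := rfl
  by_cases h : x (Fin.last n) = m
  · rw [if_pos h, if_pos (by rw [hx, h]; ring)]
  · rw [if_neg h, if_neg (show ¬((-u + x) (Fin.last n) = m - u (Fin.last n)) from by
      rw [hx]; intro hc; exact h (by omega)), mul_zero]

lemma eq_sum_single (a : AddMonoidAlgebra κ (Fin (n + 1) → ℤ)) :
    a = ∑ u ∈ a.coeff.support, AddMonoidAlgebra.single u (a.coeff u) := by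
  ext x
  rw [finsupp_sum_apply]; simp only [AddMonoidAlgebra.coeff_single]
  rw [Finset.sum_congr rfl (fun u _ => Finsupp.single_apply),
    Finset.sum_ite_eq' a.coeff.support x (fun u => a.coeff u)]
  split_ifs with h
  · rfl
  · exact Finsupp.notMem_support_iff.mp h

lemma compL_mul_homog (m p : ℤ) (a g : AddMonoidAlgebra κ (Fin (n + 1) → ℤ))
    (ha : ∀ x ∈ a.coeff.support, x (Fin.last n) = p) :
    compL m (a * g) = a * compL (m - p) g := by
  calc compL m (a * g)
      = compL m (∑ u ∈ a.coeff.support, AddMonoidAlgebra.single u (a.coeff u) * g) := by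
        rw [← Finset.sum_mul, ← eq_sum_single]
    _ = ∑ u ∈ a.coeff.support, compL m (AddMonoidAlgebra.single u (a.coeff u) * g) := compL_sum _ _ _
    _ = ∑ u ∈ a.coeff.support, AddMonoidAlgebra.single u (a.coeff u) * compL (m - p) g :=
        Finset.sum_congr rfl (fun u hu => by rw [compL_single_mul, ha u hu])
    _ = a * compL (m - p) g := by rw [← Finset.sum_mul, ← eq_sum_single]

lemma sum_compL (g : AddMonoidAlgebra κ (Fin (n + 1) → ℤ)) :
    ∑ m ∈ g.coeff.support.image (fun x => x (Fin.last n)), compL m g = g := by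
  ext x
  rw [finsupp_sum_apply]
  simp only [compL_apply]
  rw [Finset.sum_ite_eq (g.coeff.support.image (fun x => x (Fin.last n))) (x (Fin.last n))
    (fun _ => g.coeff x)]
  split_ifs with h
  · rfl
  · symm
    rw [← Finsupp.notMem_support_iff]
    exact fun hs => h (Finset.mem_image_of_mem _ hs)

lemma initialFormLast_eq_compL (H : AddMonoidAlgebra κ (Fin (n + 1) → ℤ)) (μ : ℤ)
    (h1 : ∃ x ∈ H.coeff.support, x (Fin.last n) = μ)
    (h2 : ∀ x ∈ H.coeff.support, μ ≤ x (Fin.last n)) :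
    initialFormLast H = compL μ H := by
  have hset : H.coeff.support.filter
      (fun lam => ∀ mu ∈ H.coeff.support, lam (Fin.last n) ≤ mu (Fin.last n))
      = H.coeff.support.filter (fun lam => lam (Fin.last n) = μ) := by
    apply Finset.filter_congr
    intro x hx
    obtain ⟨y, hy, hyμ⟩ := h1
    constructor
    · intro hall
      exact le_antisymm (hyμ ▸ hall y hy) (h2 x hx)
    · intro he mu hmu
      rw [he]; exact h2 mu hmu
  rw [initialFormLast, hset]
  ext x
  rw [finsupp_sum_apply, compL_apply]; simp only [AddMonoidAlgebra.coeff_single]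
  rw [Finset.sum_congr rfl (fun lam _ => Finsupp.single_apply),
      Finset.sum_ite_eq' _ x (fun lam => H.coeff lam)]
  by_cases hμ : x (Fin.last n) = μ
  · rw [if_pos hμ]
    by_cases hs : x ∈ H.coeff.support
    · rw [if_pos (Finset.mem_filter.mpr ⟨hs, hμ⟩)]
    · rw [if_neg (fun hc => hs (Finset.mem_filter.mp hc).1)]
      exact (Finsupp.notMem_support_iff.mp hs).symm
  · rw [if_neg hμ]
    split_ifs with hc
    · exact absurd (Finset.mem_filter.mp hc).2 hμ
    · rfl

lemma forward_key (I : Ideal (AddMonoidAlgebra κ (Fin (n + 1) → ℤ)))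
    {g : AddMonoidAlgebra κ (Fin (n + 1) → ℤ)}
    (hg : g ∈ Ideal.span {g | ∃ h ∈ I, g = initialFormLast h}) :
    ∀ m : ℤ, ∃ H ∈ I, compL m H = compL m g ∧ ∀ x ∈ H.coeff.support, m ≤ x (Fin.last n) := by
  induction hg using Submodule.span_induction with
  | mem g hgS =>
    obtain ⟨h, hI, rfl⟩ := hgS
    by_cases hh : h.coeff.support.Nonempty
    · have hsne : (h.coeff.support.image (fun x => x (Fin.last n))).Nonempty := hh.image _
      set μ := (h.coeff.support.image (fun x => x (Fin.last n))).min' hsne with hμ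
      have h1 : ∃ x ∈ h.coeff.support, x (Fin.last n) = μ := by
        have := (h.coeff.support.image (fun x => x (Fin.last n))).min'_mem hsne
        rw [Finset.mem_image] at this
        exact this
      have h2 : ∀ x ∈ h.coeff.support, μ ≤ x (Fin.last n) := fun x hx =>
        Finset.min'_le _ _ (Finset.mem_image_of_mem _ hx)
      have hIn : initialFormLast h = compL μ h := initialFormLast_eq_compL h μ h1 h2
      intro m
      by_cases hm : m = μ
      · subst hm
        refine ⟨h, hI, ?_, h2⟩
        rw [hIn, compL_eq_self (g := compL μ h) (fun x hx => (mem_support_compL hx).2)]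
      · refine ⟨0, I.zero_mem, ?_, by simp⟩
        rw [compL_zero, hIn,
          compL_eq_zero (fun x hx hc => hm (((mem_support_compL hx).2).symm.trans hc).symm)]
    · intro m
      refine ⟨0, I.zero_mem, ?_, by simp⟩
      have hz : initialFormLast h = 0 := by
        rw [initialFormLast]
        rw [Finset.not_nonempty_iff_eq_empty] at hh
        simp [hh]
      rw [hz]
  | zero => intro m; exact ⟨0, I.zero_mem, rfl, by simp⟩
  | add x y hx hy ihx ihy =>
    intro m
    obtain ⟨H1, h1I, h1c, h1s⟩ := ihx m
    obtain ⟨H2, h2I, h2c, h2s⟩ := ihy m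
    refine ⟨H1 + H2, I.add_mem h1I h2I, by rw [compL_add, compL_add, h1c, h2c], ?_⟩
    intro z hz
    rw [AddMonoidAlgebra.coeff_add] at hz; rcases Finset.mem_union.mp (Finsupp.support_add hz) with h | h
    exacts [h1s z h, h2s z h]
  | smul c g' hg' ih =>
    intro m
    choose Hf HI Hc Hs using ih
    refine ⟨∑ p ∈ c.coeff.support.image (fun x => x (Fin.last n)), compL p c * Hf (m - p),
      Ideal.sum_mem I (fun p _ => I.mul_mem_left _ (HI _)), ?_, ?_⟩
    · rw [smul_eq_mul, compL_sum]
      calc ∑ p ∈ c.coeff.support.image (fun x => x (Fin.last n)), compL m (compL p c * Hf (m - p))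
          = ∑ p ∈ c.coeff.support.image (fun x => x (Fin.last n)), compL p c * compL (m - p) g' :=
            Finset.sum_congr rfl (fun p _ => by
              rw [compL_mul_homog m p _ _ (fun x hx => (mem_support_compL hx).2), Hc (m - p)])
        _ = ∑ p ∈ c.coeff.support.image (fun x => x (Fin.last n)), compL m (compL p c * g') :=
            Finset.sum_congr rfl (fun p _ => by
              rw [compL_mul_homog m p _ _ (fun x hx => (mem_support_compL hx).2)])
        _ = compL m (∑ p ∈ c.coeff.support.image (fun x => x (Fin.last n)), compL p c * g') :=
            (compL_sum _ _ _).symm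
        _ = compL m (c * g') := by rw [← Finset.sum_mul, sum_compL]
    · intro x hx
      rw [AddMonoidAlgebra.coeff_sum] at hx; obtain ⟨p, hp, hxp⟩ := Finsupp.mem_support_finset_sum x hx
      obtain ⟨u, hu, v, hv, huv⟩ := Finset.mem_add.mp (AddMonoidAlgebra.support_coeff_mul_subset _ _ hxp)
      have hu' := (mem_support_compL hu).2
      have hv' := Hs (m - p) v hv
      have hxw : x (Fin.last n) = u (Fin.last n) + v (Fin.last n) := by rw [← huv]; rfl
      omega

end Aux

/-- Let `κ` be a field and `I` an ideal of the Laurent polynomial ring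
`κ[x₁^{±1}, …, x_{n+1}^{±1}]`, and write `x_{n+1}` for the last variable.  For every
Laurent polynomial `f` not involving `x_{n+1}`, `f` lies in the ideal generated by
`{In_{e_{n+1}} g : g ∈ I}` if and only if there are `d ≥ 0` and Laurent polynomials
`f₁, …, f_d` not involving `x_{n+1}` with `f + x_{n+1} f₁ + ⋯ + x_{n+1}^d f_d ∈ I`. -/
theorem mem_initial_ideal_iff_lift
    {κ : Type*} [Field κ] {n : ℕ}
    (I : Ideal (AddMonoidAlgebra κ (Fin (n + 1) → ℤ)))
    (f : AddMonoidAlgebra κ (Fin (n + 1) → ℤ))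
    (hf : ∀ lam ∈ f.coeff.support, lam (Fin.last n) = 0) :
    f ∈ Ideal.span {g | ∃ h ∈ I, g = initialFormLast h} ↔
      ∃ (d : ℕ) (fs : ℕ → AddMonoidAlgebra κ (Fin (n + 1) → ℤ)),
        (∀ k, ∀ lam ∈ (fs k).coeff.support, lam (Fin.last n) = 0) ∧
        f + ∑ k ∈ Finset.range d,
            (AddMonoidAlgebra.single (Pi.single (Fin.last n) ((k : ℤ) + 1)) (1 : κ)) * fs k
          ∈ I := by
  constructor
  · intro hmem
    obtain ⟨H, HI, hc, hs⟩ := forward_key I hmem 0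
    rw [compL_eq_self hf] at hc
    obtain ⟨d, hdle⟩ : ∃ d : ℕ, ∀ x ∈ H.coeff.support, x (Fin.last n) ≤ (d : ℤ) := by
      refine ⟨H.coeff.support.sup (fun x => (x (Fin.last n)).toNat), fun x hx => ?_⟩
      have h1 : (x (Fin.last n)).toNat ≤ H.coeff.support.sup (fun x => (x (Fin.last n)).toNat) := by
        simpa using Finset.le_sup (f := fun y => (y (Fin.last n)).toNat) hx
      have h2 := hs x hx
      revert h1
      generalize H.coeff.support.sup (fun x => (x (Fin.last n)).toNat) = D
      intro h1
      omega
    refine ⟨d, fun k => AddMonoidAlgebra.single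
      (Pi.single (Fin.last n) (-((k : ℤ) + 1))) 1 * compL ((k : ℤ) + 1) H, ?_, ?_⟩
    · intro k x hx
      obtain ⟨u, hu, v, hv, huv⟩ := Finset.mem_add.mp (AddMonoidAlgebra.support_coeff_mul_subset _ _ hx)
      have hu' : u = Pi.single (Fin.last n) (-((k : ℤ) + 1)) :=
        Finset.mem_singleton.mp (Finsupp.support_single_subset hu)
      have hv' := (mem_support_compL hv).2
      have hxw : x (Fin.last n) = u (Fin.last n) + v (Fin.last n) := by rw [← huv]; rfl
      rw [hxw, hu', hv', Pi.single_eq_same]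
      ring
    · have key : ∀ k : ℕ, AddMonoidAlgebra.single (Pi.single (Fin.last n) ((k : ℤ) + 1)) (1 : κ) *
          (AddMonoidAlgebra.single (Pi.single (Fin.last n) (-((k : ℤ) + 1))) 1 *
            compL ((k : ℤ) + 1) H) = compL ((k : ℤ) + 1) H := by
        intro k
        rw [← mul_assoc, AddMonoidAlgebra.single_mul_single]
        have hps : Pi.single (Fin.last n) ((k : ℤ) + 1)
            + Pi.single (Fin.last n) (-((k : ℤ) + 1)) = (0 : Fin (n + 1) → ℤ) := by
          rw [← Pi.single_add]
          have hz0 : (k : ℤ) + 1 + -((k : ℤ) + 1) = 0 := by ring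
          rw [hz0, Pi.single_zero]
        rw [hps, one_mul, ← AddMonoidAlgebra.one_def, one_mul]
      have hsum : f + ∑ k ∈ Finset.range d,
          AddMonoidAlgebra.single (Pi.single (Fin.last n) ((k : ℤ) + 1)) (1 : κ) *
            (AddMonoidAlgebra.single (Pi.single (Fin.last n) (-((k : ℤ) + 1))) 1 *
              compL ((k : ℤ) + 1) H) = H := by
        rw [Finset.sum_congr rfl (fun k _ => key k)]
        ext x
        rw [AddMonoidAlgebra.coeff_add, Finsupp.add_apply, finsupp_sum_apply]
        simp only [compL_apply]
        have hfx : f.coeff x = if x (Fin.last n) = 0 then H.coeff x else 0 := by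
          rw [← hc, compL_apply]
        by_cases h0 : x (Fin.last n) = 0
        · have hsz : ∀ k ∈ Finset.range d,
              (if x (Fin.last n) = (k : ℤ) + 1 then H.coeff x else 0) = 0 := by
            intro k _
            split_ifs with hck
            · exact absurd hck (by omega)
            · rfl
          rw [hfx, if_pos h0, Finset.sum_eq_zero hsz, add_zero]
        · rw [hfx, if_neg h0, zero_add]
          by_cases hxs : x ∈ H.coeff.support
          · have hge : (0 : ℤ) ≤ x (Fin.last n) := hs x hxs
            have hle : x (Fin.last n) ≤ (d : ℤ) := hdle x hxs
            rw [Finset.sum_eq_single ((x (Fin.last n)).toNat - 1)]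
            · split_ifs with hck
              · rfl
              · exact absurd (by omega : x (Fin.last n)
                  = (((x (Fin.last n)).toNat - 1 : ℕ) : ℤ) + 1) hck
            · intro k hk hne
              split_ifs with hck
              · exact absurd hck (by omega)
              · rfl
            · intro hnotin
              exact absurd (Finset.mem_range.mpr (by omega)) hnotin
          · have hz : H.coeff x = 0 := Finsupp.notMem_support_iff.mp hxs
            rw [hz, Finset.sum_eq_zero (fun k _ => by split_ifs <;> rfl)]
      rw [hsum]
      exact HI
  · rintro ⟨d, fs, hfs, hH⟩
    by_cases hf0 : f = 0
    · rw [hf0]; exact Ideal.zero_mem _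
    set H := f + ∑ k ∈ Finset.range d,
        AddMonoidAlgebra.single (Pi.single (Fin.last n) ((k : ℤ) + 1)) (1 : κ) * fs k with hHdef
    have happly : ∀ x, H.coeff x = f.coeff x + ∑ k ∈ Finset.range d,
        (fs k).coeff (-(Pi.single (Fin.last n) ((k : ℤ) + 1)) + x) := by
      intro x
      rw [hHdef, AddMonoidAlgebra.coeff_add, Finsupp.add_apply, finsupp_sum_apply]
      congr 1
      exact Finset.sum_congr rfl (fun k _ => by
        rw [AddMonoidAlgebra.coeff_single_mul_apply, one_mul])
    have hterm : ∀ (k : ℕ) (x : Fin (n + 1) → ℤ), x (Fin.last n) ≠ (k : ℤ) + 1 →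
        (fs k).coeff ((-(Pi.single (Fin.last n) ((k : ℤ) + 1)) + x : Fin (n + 1) → ℤ)) = 0 := by
      intro k x hx
      by_contra hne
      have hmem := Finsupp.mem_support_iff.mpr hne
      have hzero := hfs k _ hmem
      have hw : ((-(Pi.single (Fin.last n) ((k : ℤ) + 1)) + x : Fin (n + 1) → ℤ)) (Fin.last n)
          = -((k : ℤ) + 1) + x (Fin.last n) := by
        have h1 : ((-(Pi.single (Fin.last n) ((k : ℤ) + 1)) + x : Fin (n + 1) → ℤ)) (Fin.last n)
            = -((Pi.single (Fin.last n) ((k : ℤ) + 1) : Fin (n + 1) → ℤ) (Fin.last n))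
              + x (Fin.last n) := rfl
        rw [h1, Pi.single_eq_same]
      rw [hw] at hzero
      exact hx (by omega)
    have hzero : ∀ x, x (Fin.last n) = 0 → H.coeff x = f.coeff x := by
      intro x hx
      rw [happly, Finset.sum_eq_zero (fun k _ => hterm k x (by omega)), add_zero]
    have hsupp : ∀ x ∈ H.coeff.support, (0 : ℤ) ≤ x (Fin.last n) := by
      intro x hx
      by_contra hneg
      push_neg at hneg
      apply Finsupp.mem_support_iff.mp hx
      rw [happly]
      have hfx : f.coeff x = 0 := by
        rw [← Finsupp.notMem_support_iff]
        intro hm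
        have := hf x hm
        omega
      rw [hfx, zero_add]
      exact Finset.sum_eq_zero (fun k _ => hterm k x (by omega))
    obtain ⟨x0, hx0⟩ := (Finsupp.support_nonempty_iff (f := f.coeff)).mpr (by simpa using hf0)
    have hx0w := hf x0 hx0
    have hx0H : x0 ∈ H.coeff.support := by
      rw [Finsupp.mem_support_iff, hzero x0 hx0w]
      exact Finsupp.mem_support_iff.mp hx0
    have hIn : initialFormLast H = compL 0 H :=
      initialFormLast_eq_compL H 0 ⟨x0, hx0H, hx0w⟩ hsupp
    have hfH : compL 0 H = f := by
      ext x
      rw [compL_apply]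
      split_ifs with hx
      · exact hzero x hx
      · symm
        rw [← Finsupp.notMem_support_iff]
        exact fun hm => hx (hf x hm)
    exact Ideal.subset_span ⟨H, hH, by rw [hIn, hfH]⟩
end

section
/- Let K be an algebraically closed field with a surjective valuation v: K^* → ℚ. Let m ≥ 2 and let d(i,j) ∈ ℚ, for 1 ≤ i < j ≤ m, be a symmetric array such that for all distinct indices i, j, k the minimum of d(i,j), d(j,k), d(i,k) is attained at least twice. Then there exist distinct elements z_1, …, z_m ∈ K with v(z_i − z_j) = d(i,j) for all i ≠ j. -/
section Helpers

variable {K : Type*} [Field K] (v : K → WithTop ℚ)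
  (hv0 : ∀ x : K, v x = ⊤ ↔ x = 0)
  (hvmul : ∀ x y : K, v (x * y) = v x + v y)
  (hvadd : ∀ x y : K, min (v x) (v y) ≤ v (x + y))

include hv0 hvmul in
lemma my_v_one : v 1 = 0 := by
  have h := hvmul 1 1
  rw [mul_one] at h
  have hne : v 1 ≠ ⊤ := by simp [hv0]
  obtain ⟨q, hq⟩ := WithTop.ne_top_iff_exists.mp hne
  rw [← hq, ← WithTop.coe_add] at h
  have : q = q + q := WithTop.coe_injective h
  have : q = 0 := by linarith
  rw [← hq, this]; rfl

include hv0 hvmul in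
lemma my_v_neg (x : K) : v (-x) = v x := by
  have h1 : v (-1 : K) = 0 := by
    have h := hvmul (-1 : K) (-1)
    rw [neg_mul_neg, one_mul, my_v_one v hv0 hvmul] at h
    have hne : v (-1 : K) ≠ ⊤ := by simp [hv0]
    obtain ⟨q, hq⟩ := WithTop.ne_top_iff_exists.mp hne
    rw [← hq, ← WithTop.coe_add] at h
    have : q + q = 0 := WithTop.coe_injective h.symm
    have : q = 0 := by linarith
    rw [← hq, this]; rfl
  have := hvmul (-1 : K) x
  rw [neg_one_mul, h1, zero_add] at this
  exact this

include hv0 hvmul hvadd in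
lemma my_v_add_lt {x y : K} (h : v x < v y) : v (x + y) = v x := by
  have h1 : min (v x) (v y) ≤ v (x + y) := hvadd x y
  rw [min_eq_left h.le] at h1
  have h2 : min (v (x + y)) (v (-y)) ≤ v (x + y + -y) := hvadd _ _
  rw [add_neg_cancel_right, my_v_neg v hv0 hvmul] at h2
  rcases min_cases (v (x + y)) (v y) with ⟨he, _⟩ | ⟨he, hle⟩
  · rw [he] at h2; exact le_antisymm h2 h1
  · rw [he] at h2; exact absurd (lt_of_lt_of_le h h2) (lt_irrefl _)

include hvmul in
lemma my_v_prod {ι : Type*} (s : Finset ι) (f : ι → K) (h1 : v 1 = 0) :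
    v (∏ i ∈ s, f i) = ∑ i ∈ s, v (f i) := by
  classical
  induction s using Finset.cons_induction with
  | empty => simpa using h1
  | cons a s ha ih => simp [Finset.prod_insert ha, Finset.sum_insert ha, hvmul, ih]

include hv0 hvmul hvadd in
lemma my_exists_good [IsAlgClosed K] (B : Finset K) (hB : ∀ b ∈ B, v b = 0) :
    ∃ l : K, v l = 0 ∧ ∀ b ∈ B, v (l - b) = 0 := by
  classical
  set Q : Polynomial K := Polynomial.X * ∏ b ∈ B, (Polynomial.X - Polynomial.C b) with hQ
  have hQm : Q.Monic := (Polynomial.monic_X).mul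
    (Polynomial.monic_prod_of_monic _ _ fun b _ => Polynomial.monic_X_sub_C b)
  have hQd : Q.natDegree = 1 + B.card := by
    rw [hQ, Polynomial.Monic.natDegree_mul Polynomial.monic_X
      (Polynomial.monic_prod_of_monic _ _ fun b _ => Polynomial.monic_X_sub_C b),
      Polynomial.natDegree_X, Polynomial.natDegree_prod_of_monic _ _
        (fun b _ => Polynomial.monic_X_sub_C b)]
    simp [Polynomial.natDegree_X_sub_C]
  set P : Polynomial K := Q - Polynomial.C 1 with hP
  have hPd : P.natDegree = 1 + B.card := by rw [hP, Polynomial.natDegree_sub_C, hQd]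
  have hPdeg : P.degree ≠ 0 := by
    intro h
    have : P.natDegree = 0 := Polynomial.natDegree_eq_zero_iff_degree_le_zero.mpr h.le
    omega
  obtain ⟨l, hl⟩ := IsAlgClosed.exists_root P hPdeg
  have hroot : l * ∏ b ∈ B, (l - b) = 1 := by
    have := hl
    rw [Polynomial.IsRoot, hP, hQ] at this
    simpa [sub_eq_zero, Polynomial.eval_prod] using this
  have h1 : v 1 = 0 := my_v_one v hv0 hvmul
  have hsum : v l + ∑ b ∈ B, v (l - b) = 0 := by
    rw [← my_v_prod v hvmul B _ h1, ← hvmul, hroot, h1]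
  have hbne : ∀ b ∈ B, v (-b) = 0 := fun b hb => by
    rw [my_v_neg v hv0 hvmul]; exact hB b hb
  rcases lt_trichotomy (v l) 0 with hlt | heq | hgt
  · exfalso
    have hterm : ∀ b ∈ B, v (l - b) = v l := fun b hb => by
      rw [sub_eq_add_neg]
      exact my_v_add_lt v hv0 hvmul hvadd (by rw [hbne b hb]; exact hlt)
    have hsle : ∑ b ∈ B, v (l - b) ≤ 0 :=
      Finset.sum_nonpos fun b hb => by rw [hterm b hb]; exact hlt.le
    have : v l + ∑ b ∈ B, v (l - b) < 0 :=
      lt_of_le_of_lt (by calc v l + ∑ b ∈ B, v (l - b) ≤ v l + 0 := add_le_add_right hsle _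
                           _ = v l := add_zero _) hlt
    rw [hsum] at this; exact lt_irrefl _ this
  · refine ⟨l, heq, ?_⟩
    rw [heq, zero_add] at hsum
    have hnn : ∀ b ∈ B, 0 ≤ v (l - b) := fun b hb => by
      have := hvadd l (-b)
      rw [← sub_eq_add_neg] at this
      rw [heq, hbne b hb] at this
      simpa using this
    intro b hb
    exact (Finset.sum_eq_zero_iff_of_nonneg hnn).mp hsum b hb
  · exfalso
    have hterm : ∀ b ∈ B, v (l - b) = 0 := fun b hb => by
      rw [sub_eq_add_neg, add_comm, ← hbne b hb]
      exact my_v_add_lt v hv0 hvmul hvadd (by rw [hbne b hb]; exact hgt)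
    rw [Finset.sum_congr rfl hterm, Finset.sum_const, smul_zero, add_zero] at hsum
    exact absurd hsum hgt.ne'

include hv0 hvmul hvadd in
lemma my_key [IsAlgClosed K] (hsurj : ∀ q : ℚ, ∃ x : K, v x = (q : WithTop ℚ))
    (m : ℕ) (d : Fin m → Fin m → ℚ)
    (hsym : ∀ i j, i ≠ j → d i j = d j i)
    (htree : ∀ i j k, i ≠ j → j ≠ k → i ≠ k →
      (d i j = d j k ∧ d i j ≤ d i k) ∨ (d i j = d i k ∧ d i j ≤ d j k) ∨
        (d j k = d i k ∧ d j k ≤ d i j)) :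
    ∃ z : Fin m → K, ∀ i j, i ≠ j → v (z i - z j) = ((d i j : ℚ) : WithTop ℚ) := by
  classical
  induction m with
  | zero => exact ⟨fun i => i.elim0, fun i => i.elim0⟩
  | succ m ih =>
    rcases Nat.eq_zero_or_pos m with h0 | hpos
    · subst h0
      exact ⟨fun _ => 0, fun i j hij => absurd (Fin.ext (by omega)) hij⟩
    have hcsne : ∀ i j : Fin m, i ≠ j → i.castSucc ≠ j.castSucc :=
      fun i j h => (Fin.castSucc_injective m).ne h
    obtain ⟨z, hz⟩ := ih (fun i j => d i.castSucc j.castSucc)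
      (fun i j h => hsym _ _ (hcsne i j h))
      (fun i j k h1 h2 h3 => htree _ _ _ (hcsne i j h1) (hcsne j k h2) (hcsne i k h3))
    haveI : Nonempty (Fin m) := Fin.pos_iff_nonempty.mp hpos
    obtain ⟨i0, hi0⟩ := Finite.exists_max (fun j : Fin m => d (Fin.last m) j.castSucc)
    set t : ℚ := d (Fin.last m) i0.castSucc with ht
    have hlastne : ∀ j : Fin m, Fin.last m ≠ j.castSucc := fun j => (Fin.castSucc_lt_last j).ne'
    -- the two tree facts
    have hfact : ∀ j : Fin m, j ≠ i0 →
        (d i0.castSucc j.castSucc < t → d (Fin.last m) j.castSucc = d i0.castSucc j.castSucc) ∧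
        (t ≤ d i0.castSucc j.castSucc → d (Fin.last m) j.castSucc = t) := by
      intro j hj
      have hmax := hi0 j
      have H := htree (Fin.last m) i0.castSucc j.castSucc (hlastne i0)
        (hcsne i0 j (Ne.symm hj)) (hlastne j)
      constructor
      · intro hc
        rcases H with ⟨h1, h2⟩ | ⟨h1, h2⟩ | ⟨h1, h2⟩ <;> linarith
      · intro hc
        rcases H with ⟨h1, h2⟩ | ⟨h1, h2⟩ | ⟨h1, h2⟩ <;> linarith
    obtain ⟨w0, hw0⟩ := hsurj t
    have hw0ne : w0 ≠ 0 := by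
      intro h; rw [h, (hv0 0).mpr rfl] at hw0; exact (WithTop.coe_ne_top hw0.symm).elim
    have hw0inv : v w0⁻¹ = ((-t : ℚ) : WithTop ℚ) := by
      have h := hvmul w0 w0⁻¹
      rw [mul_inv_cancel₀ hw0ne, my_v_one v hv0 hvmul, hw0] at h
      have hne : v w0⁻¹ ≠ ⊤ := by simp [hv0, hw0ne]
      obtain ⟨q, hq⟩ := WithTop.ne_top_iff_exists.mp hne
      rw [← hq, ← WithTop.coe_add] at h
      have : t + q = 0 := WithTop.coe_injective h.symm
      rw [← hq]
      congr 1
      linarith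
    -- the bad set
    set B : Finset K := (Finset.univ.filter
        (fun j : Fin m => j ≠ i0 ∧ d i0.castSucc j.castSucc = t)).image
        (fun j => -((z i0 - z j) / w0)) with hBdef
    have hB : ∀ b ∈ B, v b = 0 := by
      intro b hb
      rw [hBdef] at hb
      obtain ⟨j, hjmem, hjeq⟩ := Finset.mem_image.mp hb
      obtain ⟨-, hjne, hjt⟩ := Finset.mem_filter.mp hjmem
      rw [← hjeq, my_v_neg v hv0 hvmul, div_eq_mul_inv, hvmul,
        hz i0 j (Ne.symm hjne), hjt, hw0inv, ← WithTop.coe_add]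
      norm_num
    obtain ⟨l, hl0, hlB⟩ := my_exists_good v hv0 hvmul hvadd B hB
    set w : K := l * w0 with hwdef
    have hvw : v w = (t : WithTop ℚ) := by rw [hwdef, hvmul, hl0, hw0, zero_add]
    -- main computation
    have main : ∀ j : Fin m, v ((z i0 + w) - z j) = ((d (Fin.last m) j.castSucc : ℚ) : WithTop ℚ) := by
      intro j
      by_cases hji : j = i0
      · subst hji
        have : (z j + w) - z j = w := by ring
        rw [this, hvw, ht]
      · have hva : v (z i0 - z j) = ((d i0.castSucc j.castSucc : ℚ) : WithTop ℚ) :=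
          hz i0 j (Ne.symm hji)
        have hrw : (z i0 + w) - z j = (z i0 - z j) + w := by ring
        rw [hrw]
        rcases lt_trichotomy (d i0.castSucc j.castSucc) t with hc | hc | hc
        · rw [my_v_add_lt v hv0 hvmul hvadd (by rw [hva, hvw]; exact_mod_cast hc), hva,
            (hfact j hji).1 hc]
        · -- equal case
          have hmem : -((z i0 - z j) / w0) ∈ B := by
            rw [hBdef]
            exact Finset.mem_image.mpr ⟨j, by simp [hji, hc], rfl⟩
          have hfold : (z i0 - z j) + w = w0 * (l - -((z i0 - z j) / w0)) := by
            field_simp [hwdef]; ring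
          rw [hfold, hvmul, hw0, hlB _ hmem, add_zero, (hfact j hji).2 hc.ge]
        · rw [add_comm, my_v_add_lt v hv0 hvmul hvadd (by rw [hva, hvw]; exact_mod_cast hc),
            hvw, (hfact j hji).2 hc.le]
    refine ⟨Fin.snoc z (z i0 + w), fun i j hij => ?_⟩
    induction i using Fin.lastCases with
    | last =>
      induction j using Fin.lastCases with
      | last => exact absurd rfl hij
      | cast j => rw [Fin.snoc_last, Fin.snoc_castSucc]; exact main j
    | cast i =>
      induction j using Fin.lastCases with
      | last =>
        rw [Fin.snoc_last, Fin.snoc_castSucc, ← my_v_neg v hv0 hvmul, neg_sub, main i,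
          hsym (Fin.last m) i.castSucc (hlastne i)]
      | cast j =>
        rw [Fin.snoc_castSucc, Fin.snoc_castSucc]
        exact hz i j (fun h => hij (by rw [h]))
end Helpers

/-- Let `K` be an algebraically closed field with a surjective valuation
`v : K^* → ℚ` (encoded as `v : K → WithTop ℚ` with `v x = ⊤` iff `x = 0`).
Let `m ≥ 2` and let `d i j ∈ ℚ` (`i ≠ j`) be a symmetric array such that for all distinct
`i, j, k` the minimum of `d i j, d j k, d i k` is attained at least twice.  Then there are
distinct `z₁, …, z_m ∈ K` with `v (zᵢ - zⱼ) = d i j` for all `i ≠ j`. -/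
theorem tree_metric_realizable_in_valued_field
    {K : Type*} [Field K] [IsAlgClosed K] (v : K → WithTop ℚ)
    (hv0 : ∀ x : K, v x = ⊤ ↔ x = 0)
    (hvmul : ∀ x y : K, v (x * y) = v x + v y)
    (hvadd : ∀ x y : K, min (v x) (v y) ≤ v (x + y))
    (hsurj : ∀ q : ℚ, ∃ x : K, v x = (q : WithTop ℚ))
    (m : ℕ) (hm : 2 ≤ m) (d : Fin m → Fin m → ℚ)
    (hsym : ∀ i j, i ≠ j → d i j = d j i)
    (htree : ∀ i j k, i ≠ j → j ≠ k → i ≠ k →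
      (d i j = d j k ∧ d i j ≤ d i k) ∨ (d i j = d i k ∧ d i j ≤ d j k) ∨
        (d j k = d i k ∧ d j k ≤ d i j)) :
    ∃ z : Fin m → K, Function.Injective z ∧
      ∀ i j, i ≠ j → v (z i - z j) = ((d i j : ℚ) : WithTop ℚ) := by
  obtain ⟨z, hz⟩ := my_key v hv0 hvmul hvadd hsurj m d hsym htree
  refine ⟨z, ?_, hz⟩
  intro i j hij
  by_contra hne
  have h1 := hz i j hne
  rw [sub_eq_zero.mpr hij, (hv0 0).mpr rfl] at h1
  exact WithTop.coe_ne_top h1.symm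
end
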